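/- arXiv:1207.5899 — 5 statements merged into one kernel-verified Lean document; each statement's English description precedes it below -/
import Mathlib

section
/- Let u, v : ℝ → ℝ be càdlàg functions of locally bounded variation such that lim_{x→∞} u(x)v(x) = c₊ and lim_{x→−∞} u(x)v(x) = c₋ for real constants c₊, c₋. If ∫ |v(x−)| |du|(x) < ∞ and ∫ |u(x)| |dv|(x) < ∞, then the integration-by-parts formula ∫ u(x) dv(x) = c₊ − c₋ − ∫ v(x−) du(x) holds, where all integrals are over (−∞, ∞). -/
open MeasureTheory Filter Set Function


lemma aux_integrableOn {φ : ℝ → ℝ} (hφ : Monotone φ) (μ : Measure ℝ) {a b : ℝ}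
    (hμ : μ (Set.Ioc a b) ≠ ⊤) : IntegrableOn φ (Set.Ioc a b) μ := by
  haveI : IsFiniteMeasure (μ.restrict (Set.Ioc a b)) :=
    ⟨by rwa [Measure.restrict_apply_univ, lt_top_iff_ne_top]⟩
  refine ⟨hφ.measurable.aestronglyMeasurable, ?_⟩
  apply HasFiniteIntegral.of_bounded (C := max |φ a| |φ b|)
  filter_upwards [ae_restrict_mem measurableSet_Ioc] with x hx
  simpa [Real.norm_eq_abs] using abs_le_max_abs_abs (hφ hx.1.le) (hφ hx.2)

lemma stieltjes_ibp_Ioc (f g : StieltjesFunction ℝ) {a b : ℝ} (hab : a ≤ b) :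
    (∫ x in Set.Ioc a b, f x ∂g.measure)
      + (∫ x in Set.Ioc a b, Function.leftLim g x ∂f.measure)
      = f b * g b - f a * g a := by
  set s : Set ℝ := Set.Ioc a b with hs
  set μ := f.measure
  set ν := g.measure
  have hμs : μ s ≠ ⊤ := by rw [hs, StieltjesFunction.measure_Ioc]; exact ENNReal.ofReal_ne_top
  have hνs : ν s ≠ ⊤ := by rw [hs, StieltjesFunction.measure_Ioc]; exact ENNReal.ofReal_ne_top
  haveI : IsFiniteMeasure (μ.restrict s) :=
    ⟨by rwa [Measure.restrict_apply_univ, lt_top_iff_ne_top]⟩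
  haveI : IsFiniteMeasure (ν.restrict s) :=
    ⟨by rwa [Measure.restrict_apply_univ, lt_top_iff_ne_top]⟩
  have hT : MeasurableSet {p : ℝ × ℝ | p.1 ≤ p.2} :=
    measurableSet_le measurable_fst measurable_snd
  -- Fubini computation
  have E1 : ((μ.restrict s).prod (ν.restrict s)) {p : ℝ × ℝ | p.1 ≤ p.2}
      = ∫⁻ y in s, ENNReal.ofReal (f y - f a) ∂ν := by
    rw [Measure.prod_apply_symm hT]
    apply setLIntegral_congr_fun measurableSet_Ioc
    intro y hy; dsimp only
    have : (fun x => (x, y)) ⁻¹' {p : ℝ × ℝ | p.1 ≤ p.2} = Set.Iic y := rfl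
    rw [this, Measure.restrict_apply measurableSet_Iic]
    have : Set.Iic y ∩ s = Set.Ioc a y := by
      rw [hs]; ext t
      simp only [Set.mem_inter_iff, Set.mem_Iic, Set.mem_Ioc]
      exact ⟨fun ⟨h1, h2, _⟩ => ⟨h2, h1⟩, fun ⟨h1, h2⟩ => ⟨h2, h1, h2.trans hy.2⟩⟩
    rw [this, StieltjesFunction.measure_Ioc]
  have E2 : ((μ.restrict s).prod (ν.restrict s)) {p : ℝ × ℝ | p.1 ≤ p.2}ᶜ
      = ∫⁻ x in s, ENNReal.ofReal (Function.leftLim g x - g a) ∂μ := by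
    rw [Measure.prod_apply hT.compl]
    apply setLIntegral_congr_fun measurableSet_Ioc
    intro x hx; dsimp only
    have : Prod.mk x ⁻¹' {p : ℝ × ℝ | p.1 ≤ p.2}ᶜ = Set.Iio x := by
      ext y; simp [not_le]
    rw [this, Measure.restrict_apply measurableSet_Iio]
    have : Set.Iio x ∩ s = Set.Ioo a x := by
      rw [hs]; ext t
      simp only [Set.mem_inter_iff, Set.mem_Iio, Set.mem_Ioc, Set.mem_Ioo]
      exact ⟨fun ⟨h1, h2, _⟩ => ⟨h2, h1⟩, fun ⟨h1, h2⟩ => ⟨h2, h1, h2.le.trans hx.2⟩⟩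
    rw [this, StieltjesFunction.measure_Ioo]
  have Etot : (∫⁻ y in s, ENNReal.ofReal (f y - f a) ∂ν)
      + (∫⁻ x in s, ENNReal.ofReal (Function.leftLim g x - g a) ∂μ)
      = ENNReal.ofReal (f b - f a) * ENNReal.ofReal (g b - g a) := by
    rw [← E1, ← E2, measure_add_measure_compl hT]
    rw [← Set.univ_prod_univ, Measure.prod_prod, Measure.restrict_apply_univ,
      Measure.restrict_apply_univ, hs, StieltjesFunction.measure_Ioc,
      StieltjesFunction.measure_Ioc]
  -- integrabilities
  have hif : IntegrableOn f s ν := aux_integrableOn f.mono ν hνs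
  have hig : IntegrableOn (Function.leftLim g) s μ := aux_integrableOn g.mono.leftLim μ hμs
  have hif' : IntegrableOn (fun y => f y - f a) s ν := hif.sub (integrableOn_const hνs)
  have hig' : IntegrableOn (fun x => Function.leftLim g x - g a) s μ :=
    hig.sub (integrableOn_const hμs)
  have hnn1 : 0 ≤ᵐ[ν.restrict s] fun y => f y - f a := by
    filter_upwards [ae_restrict_mem measurableSet_Ioc] with y hy
    simp [sub_nonneg, f.mono hy.1.le]
  have hnn2 : 0 ≤ᵐ[μ.restrict s] fun x => Function.leftLim g x - g a := by
    filter_upwards [ae_restrict_mem measurableSet_Ioc] with x hx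
    simp [sub_nonneg, g.mono.le_leftLim hx.1]
  have R1 := ofReal_integral_eq_lintegral_ofReal hif' hnn1
  have R2 := ofReal_integral_eq_lintegral_ofReal hig' hnn2
  rw [← R1, ← R2, ← ENNReal.ofReal_mul (sub_nonneg.2 (f.mono hab)), ← ENNReal.ofReal_add
    (integral_nonneg_of_ae hnn1) (integral_nonneg_of_ae hnn2)] at Etot
  have key : (∫ y in s, (f y - f a) ∂ν) + (∫ x in s, (Function.leftLim g x - g a) ∂μ)
      = (f b - f a) * (g b - g a) := by
    refine (ENNReal.ofReal_eq_ofReal_iff ?_ ?_).1 Etot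
    · exact add_nonneg (integral_nonneg_of_ae hnn1) (integral_nonneg_of_ae hnn2)
    · exact mul_nonneg (sub_nonneg.2 (f.mono hab)) (sub_nonneg.2 (g.mono hab))
  have hνr : (ν s).toReal = g b - g a := by
    rw [hs, StieltjesFunction.measure_Ioc, ENNReal.toReal_ofReal (sub_nonneg.2 (g.mono hab))]
  have hμr : (μ s).toReal = f b - f a := by
    rw [hs, StieltjesFunction.measure_Ioc, ENNReal.toReal_ofReal (sub_nonneg.2 (f.mono hab))]
  rw [integral_sub hif (integrableOn_const hνs),
    integral_sub hig (integrableOn_const hμs),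
    setIntegral_const, setIntegral_const, measureReal_def, measureReal_def, hνr, hμr, smul_eq_mul, smul_eq_mul] at key
  linear_combination key

lemma leftLim_sub_of_stieltjes (v₁ v₂ : StieltjesFunction ℝ) (x : ℝ) :
    Function.leftLim (fun t => v₁ t - v₂ t) x = Function.leftLim v₁ x - Function.leftLim v₂ x := by
  apply leftLim_eq_of_tendsto
  exact (v₁.mono.tendsto_leftLim x).sub (v₂.mono.tendsto_leftLim x)


/-- **Integration by parts on the whole real line for càdlàg functions of locally
bounded variation.**
A càdlàg function of locally bounded variation is represented as the difference of two
nondecreasing right-continuous functions (its Jordan decomposition), i.e. of two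
Stieltjes functions; the induced signed Lebesgue–Stieltjes measure is the difference of
the corresponding Stieltjes measures and the total variation measure is their sum.
If `u = u₁ - u₂`, `v = v₁ - v₂` with `u₁,u₂,v₁,v₂` Stieltjes functions,
`u(x)v(x) → cp` as `x → ∞`, `u(x)v(x) → cm` as `x → -∞`,
`∫ |v(x-)| |du|(x) < ∞` and `∫ |u(x)| |dv|(x) < ∞`, then
`∫ u dv = cp - cm - ∫ v(x-) du(x)`. -/
theorem integration_by_parts_real_line
    (u₁ u₂ v₁ v₂ : StieltjesFunction ℝ) (cp cm : ℝ)
    (u : ℝ → ℝ) (hu : u = fun x => u₁ x - u₂ x)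
    (v : ℝ → ℝ) (hv : v = fun x => v₁ x - v₂ x)
    (htop : Tendsto (fun x => u x * v x) atTop (nhds cp))
    (hbot : Tendsto (fun x => u x * v x) atBot (nhds cm))
    (hvu : Integrable (fun x => Function.leftLim v x) (u₁.measure + u₂.measure))
    (huv : Integrable u (v₁.measure + v₂.measure)) :
    (∫ x, u x ∂v₁.measure) - (∫ x, u x ∂v₂.measure) =
      cp - cm - ((∫ x, Function.leftLim v x ∂u₁.measure) -
        (∫ x, Function.leftLim v x ∂u₂.measure)) := by
  have hLL : Function.leftLim v = fun x => Function.leftLim v₁ x - Function.leftLim v₂ x := by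
    funext x; rw [hv]; exact leftLim_sub_of_stieltjes v₁ v₂ x
  obtain ⟨huv1, huv2⟩ := (integrable_add_measure.1 huv)
  obtain ⟨hvu1, hvu2⟩ := (integrable_add_measure.1 hvu)
  -- the sets
  set s : ℕ → Set ℝ := fun n => Set.Ioc (-(n : ℝ)) n with hsdef
  have hsm : ∀ n, MeasurableSet (s n) := fun n => measurableSet_Ioc
  have hmono : Monotone s := fun n m hnm =>
    Set.Ioc_subset_Ioc (neg_le_neg (Nat.cast_le.2 hnm)) (Nat.cast_le.2 hnm)
  have hunion : (⋃ n, s n) = Set.univ := by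
    apply Set.eq_univ_of_forall
    intro x
    rcases exists_nat_gt |x| with ⟨n, hn⟩
    refine Set.mem_iUnion.2 ⟨n, ?_, (le_abs_self x).trans hn.le⟩
    have : -(n : ℝ) < -|x| := by linarith
    exact this.trans_le (neg_abs_le x)
  -- per-n identity
  have key : ∀ n : ℕ,
      ((∫ x in s n, u x ∂v₁.measure) - (∫ x in s n, u x ∂v₂.measure))
        + ((∫ x in s n, Function.leftLim v x ∂u₁.measure)
          - (∫ x in s n, Function.leftLim v x ∂u₂.measure))
      = u n * v n - u (-(n : ℝ)) * v (-(n : ℝ)) := by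
    intro n
    have hab : -(n : ℝ) ≤ (n : ℝ) := le_trans (neg_nonpos.2 n.cast_nonneg) n.cast_nonneg
    have fin : ∀ w : StieltjesFunction ℝ, w.measure (s n) ≠ ⊤ := fun w => by
      rw [hsdef, StieltjesFunction.measure_Ioc]; exact ENNReal.ofReal_ne_top
    have I1 := stieltjes_ibp_Ioc u₁ v₁ hab
    have I2 := stieltjes_ibp_Ioc u₁ v₂ hab
    have I3 := stieltjes_ibp_Ioc u₂ v₁ hab
    have I4 := stieltjes_ibp_Ioc u₂ v₂ hab
    have hu1 : ∀ w : StieltjesFunction ℝ, ∫ x in s n, u x ∂w.measure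
        = (∫ x in s n, u₁ x ∂w.measure) - (∫ x in s n, u₂ x ∂w.measure) := fun w => by
      rw [hu]
      exact integral_sub (aux_integrableOn u₁.mono w.measure (fin w))
        (aux_integrableOn u₂.mono w.measure (fin w))
    have hv1 : ∀ w : StieltjesFunction ℝ, ∫ x in s n, Function.leftLim v x ∂w.measure
        = (∫ x in s n, Function.leftLim v₁ x ∂w.measure)
          - (∫ x in s n, Function.leftLim v₂ x ∂w.measure) := fun w => by
      rw [hLL]
      exact integral_sub (aux_integrableOn v₁.mono.leftLim w.measure (fin w))
        (aux_integrableOn v₂.mono.leftLim w.measure (fin w))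
    rw [hu1, hu1, hv1, hv1, hu, hv]
    linear_combination I1 - I2 - I3 + I4
  -- limits
  have L : ∀ (w : StieltjesFunction ℝ) (φ : ℝ → ℝ), Integrable φ w.measure →
      Tendsto (fun n : ℕ => ∫ x in s n, φ x ∂w.measure) atTop (nhds (∫ x, φ x ∂w.measure)) := by
    intro w φ hφ
    have := tendsto_setIntegral_of_monotone hsm hmono
      (by rw [hunion]; exact hφ.integrableOn)
    rwa [hunion, setIntegral_univ] at this
  have hLhs : Tendsto (fun n : ℕ =>
      ((∫ x in s n, u x ∂v₁.measure) - (∫ x in s n, u x ∂v₂.measure))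
        + ((∫ x in s n, Function.leftLim v x ∂u₁.measure)
          - (∫ x in s n, Function.leftLim v x ∂u₂.measure))) atTop
      (nhds (((∫ x, u x ∂v₁.measure) - (∫ x, u x ∂v₂.measure))
        + ((∫ x, Function.leftLim v x ∂u₁.measure)
          - (∫ x, Function.leftLim v x ∂u₂.measure)))) :=
    (((L v₁ u huv1).sub (L v₂ u huv2)).add ((L u₁ _ hvu1).sub (L u₂ _ hvu2)))
  have hcast : Tendsto (fun n : ℕ => (n : ℝ)) atTop atTop := tendsto_natCast_atTop_atTop
  have hRhs : Tendsto (fun n : ℕ => u n * v n - u (-(n : ℝ)) * v (-(n : ℝ))) atTop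
      (nhds (cp - cm)) :=
    (htop.comp hcast).sub (hbot.comp (tendsto_neg_atTop_atBot.comp hcast))
  simp_rw [key] at hLhs
  have := tendsto_nhds_unique hLhs hRhs
  linarith
end

section
/- Let u, v : ℝ → ℝ be càdlàg functions of locally bounded variation, and let a < b be real numbers with ∫_{(a,b]} |v(x−)| |du|(x) < ∞ and ∫_{(a,b]} |u(x)| |dv|(x) < ∞. Then ∫_{(a,b]} u(x) dv(x) = u(b)v(b) − u(a)v(a) − ∫_{(a,b]} v(x−) du(x). -/
open MeasureTheory Set Function

/-- A monotone function is integrable on `Ioc a b` with respect to any Stieltjes measure. -/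
lemma mono_integrableOn (m : ℝ → ℝ) (hm : Monotone m) (f : StieltjesFunction ℝ) (a b : ℝ) :
    IntegrableOn m (Set.Ioc a b) f.measure := by
  apply Measure.integrableOn_of_bounded (M := max ‖m a‖ ‖m b‖)
  · rw [f.measure_Ioc]; exact ENNReal.ofReal_ne_top
  · exact hm.measurable.aestronglyMeasurable
  · filter_upwards [ae_restrict_mem measurableSet_Ioc] with x hx
    rw [Real.norm_eq_abs, abs_le]
    constructor
    · calc -(max ‖m a‖ ‖m b‖) ≤ -‖m a‖ := by simp [neg_le_neg_iff, le_max_left]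
        _ ≤ m a := neg_abs_le _
        _ ≤ m x := hm hx.1.le
    · calc m x ≤ m b := hm hx.2
        _ ≤ ‖m b‖ := le_abs_self _
        _ ≤ max ‖m a‖ ‖m b‖ := le_max_right _ _

/-- Core integration-by-parts identity for two Stieltjes functions. -/
lemma stieltjes_parts (f g : StieltjesFunction ℝ) (a b : ℝ) (hab : a < b) :
    (∫ x in Set.Ioc a b, g x ∂f.measure) + (∫ x in Set.Ioc a b, leftLim f x ∂g.measure)
      = f b * g b - f a * g a := by
  set μ := f.measure.restrict (Set.Ioc a b) with hμ
  set ν := g.measure.restrict (Set.Ioc a b) with hν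
  have hμfin : IsFiniteMeasure μ := by
    constructor
    rw [hμ, Measure.restrict_apply_univ, f.measure_Ioc]
    exact ENNReal.ofReal_lt_top
  have hνfin : IsFiniteMeasure ν := by
    constructor
    rw [hν, Measure.restrict_apply_univ, g.measure_Ioc]
    exact ENNReal.ofReal_lt_top
  have hS : MeasurableSet {p : ℝ × ℝ | p.2 ≤ p.1} :=
    measurableSet_le measurable_snd measurable_fst
  -- first slice
  have h1 : (μ.prod ν) {p : ℝ × ℝ | p.2 ≤ p.1}
      = ∫⁻ x in Set.Ioc a b, ENNReal.ofReal (g x - g a) ∂f.measure := by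
    rw [Measure.prod_apply hS]
    rw [hμ]
    apply setLIntegral_congr_fun measurableSet_Ioc
    intro x hx
    dsimp only
    have : (Prod.mk x ⁻¹' {p : ℝ × ℝ | p.2 ≤ p.1}) = Set.Iic x := rfl
    rw [this, hν, Measure.restrict_apply measurableSet_Iic]
    have : Set.Iic x ∩ Set.Ioc a b = Set.Ioc a x := by
      ext y
      simp only [Set.mem_inter_iff, Set.mem_Iic, Set.mem_Ioc]
      exact ⟨fun ⟨h1, h2, _⟩ => ⟨h2, h1⟩, fun ⟨h1, h2⟩ => ⟨h2, h1, h2.trans hx.2⟩⟩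
    rw [this, g.measure_Ioc]
  -- second slice
  have h2 : (μ.prod ν) {p : ℝ × ℝ | p.2 ≤ p.1}ᶜ
      = ∫⁻ y in Set.Ioc a b, ENNReal.ofReal (leftLim f y - f a) ∂g.measure := by
    rw [Measure.prod_apply_symm hS.compl]
    rw [hν]
    apply setLIntegral_congr_fun measurableSet_Ioc
    intro y hy
    dsimp only
    have : ((fun x => (x, y)) ⁻¹' {p : ℝ × ℝ | p.2 ≤ p.1}ᶜ) = Set.Iio y := by
      ext x
      simp [Set.mem_Iio, not_le]
    rw [this, hμ, Measure.restrict_apply measurableSet_Iio]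
    have : Set.Iio y ∩ Set.Ioc a b = Set.Ioo a y := by
      ext x
      simp only [Set.mem_inter_iff, Set.mem_Iio, Set.mem_Ioc, Set.mem_Ioo]
      exact ⟨fun ⟨h1, h2, _⟩ => ⟨h2, h1⟩, fun ⟨h1, h2⟩ => ⟨h2, h1, h2.le.trans hy.2⟩⟩
    rw [this, f.measure_Ioo]
  -- total mass
  have htot : (μ.prod ν) Set.univ
      = ENNReal.ofReal (f b - f a) * ENNReal.ofReal (g b - g a) := by
    rw [Measure.prod_apply MeasurableSet.univ]
    simp only [Set.preimage_univ]
    rw [lintegral_const, hμ, hν, Measure.restrict_apply_univ, Measure.restrict_apply_univ,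
      f.measure_Ioc, g.measure_Ioc, mul_comm]
  -- integrability facts
  have hig : Integrable (fun x => g x - g a) μ :=
    (mono_integrableOn g g.mono f a b).sub (integrable_const _)
  have hif : Integrable (fun y => leftLim f y - f a) ν :=
    (mono_integrableOn (leftLim f) f.mono.leftLim g a b).sub (integrable_const _)
  have hg_nn : 0 ≤ᵐ[μ] fun x => g x - g a := by
    rw [hμ]
    filter_upwards [ae_restrict_mem measurableSet_Ioc] with x hx
    simp [g.mono hx.1.le]
  have hf_nn : 0 ≤ᵐ[ν] fun y => leftLim f y - f a := by
    rw [hν]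
    filter_upwards [ae_restrict_mem measurableSet_Ioc] with y hy
    have := f.mono.le_leftLim hy.1
    simp [this]
  have e1 : (∫⁻ x in Set.Ioc a b, ENNReal.ofReal (g x - g a) ∂f.measure)
      = ENNReal.ofReal (∫ x, (g x - g a) ∂μ) := by
    rw [hμ] at hig hg_nn ⊢
    exact (ofReal_integral_eq_lintegral_ofReal hig hg_nn).symm
  have e2 : (∫⁻ y in Set.Ioc a b, ENNReal.ofReal (leftLim f y - f a) ∂g.measure)
      = ENNReal.ofReal (∫ y, (leftLim f y - f a) ∂ν) := by
    rw [hν] at hif hf_nn ⊢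
    exact (ofReal_integral_eq_lintegral_ofReal hif hf_nn).symm
  have hsplit := measure_add_measure_compl (μ := μ.prod ν) hS
  rw [h1, h2, htot, e1, e2] at hsplit
  have hA0 : 0 ≤ ∫ x, (g x - g a) ∂μ := integral_nonneg_of_ae hg_nn
  have hB0 : 0 ≤ ∫ y, (leftLim f y - f a) ∂ν := integral_nonneg_of_ae hf_nn
  have hfab : (0:ℝ) ≤ f b - f a := sub_nonneg.2 (f.mono hab.le)
  have hgab : (0:ℝ) ≤ g b - g a := sub_nonneg.2 (g.mono hab.le)
  rw [← ENNReal.ofReal_add hA0 hB0, ← ENNReal.ofReal_mul hfab,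
    ENNReal.ofReal_eq_ofReal_iff (add_nonneg hA0 hB0) (mul_nonneg hfab hgab)] at hsplit
  have iA : ∫ x, (g x - g a) ∂μ = (∫ x, g x ∂μ) - (f b - f a) * g a := by
    rw [integral_sub (mono_integrableOn g g.mono f a b) (integrable_const _), integral_const,
      hμ, measureReal_def, Measure.restrict_apply_univ, f.measure_Ioc, ENNReal.toReal_ofReal hfab,
      smul_eq_mul]
  have iB : ∫ y, (leftLim f y - f a) ∂ν = (∫ y, leftLim f y ∂ν) - (g b - g a) * f a := by
    rw [integral_sub (mono_integrableOn (leftLim f) f.mono.leftLim g a b) (integrable_const _),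
      integral_const, hν, measureReal_def, Measure.restrict_apply_univ, g.measure_Ioc,
      ENNReal.toReal_ofReal hgab, smul_eq_mul]
  rw [iA, iB] at hsplit
  linear_combination hsplit

/-- **Integration by parts on a half-open interval `(a,b]` for càdlàg functions of
locally bounded variation.**
A càdlàg function of locally bounded variation is the difference of two Stieltjes
functions (Jordan decomposition); its signed Lebesgue–Stieltjes measure is the
difference of the two Stieltjes measures. If `u = u₁ - u₂` and `v = v₁ - v₂` with
`u₁,u₂,v₁,v₂` Stieltjes functions, `a < b`, `∫_{(a,b]} |v(x-)| |du|(x) < ∞` and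
`∫_{(a,b]} |u(x)| |dv|(x) < ∞`, then
`∫_{(a,b]} u dv = u(b)v(b) - u(a)v(a) - ∫_{(a,b]} v(x-) du(x)`. -/
theorem integration_by_parts_Ioc
    (u₁ u₂ v₁ v₂ : StieltjesFunction ℝ) (a b : ℝ) (hab : a < b)
    (u : ℝ → ℝ) (hu : u = fun x => u₁ x - u₂ x)
    (v : ℝ → ℝ) (hv : v = fun x => v₁ x - v₂ x)
    (hvu : IntegrableOn (fun x => Function.leftLim v x) (Set.Ioc a b)
      (u₁.measure + u₂.measure))
    (huv : IntegrableOn u (Set.Ioc a b) (v₁.measure + v₂.measure)) :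
    (∫ x in Set.Ioc a b, u x ∂v₁.measure) - (∫ x in Set.Ioc a b, u x ∂v₂.measure) =
      u b * v b - u a * v a -
        ((∫ x in Set.Ioc a b, Function.leftLim v x ∂u₁.measure) -
          (∫ x in Set.Ioc a b, Function.leftLim v x ∂u₂.measure)) := by
  have hll : (fun x => Function.leftLim v x) = fun x => leftLim v₁ x - leftLim v₂ x := by
    funext x
    rw [hv]
    exact leftLim_eq_of_tendsto
      ((v₁.mono.tendsto_leftLim x).sub (v₂.mono.tendsto_leftLim x))
  have e1 : (∫ x in Set.Ioc a b, u x ∂v₁.measure)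
      = (∫ x in Set.Ioc a b, u₁ x ∂v₁.measure) - (∫ x in Set.Ioc a b, u₂ x ∂v₁.measure) := by
    rw [hu]
    exact integral_sub (mono_integrableOn u₁ u₁.mono v₁ a b) (mono_integrableOn u₂ u₂.mono v₁ a b)
  have e2 : (∫ x in Set.Ioc a b, u x ∂v₂.measure)
      = (∫ x in Set.Ioc a b, u₁ x ∂v₂.measure) - (∫ x in Set.Ioc a b, u₂ x ∂v₂.measure) := by
    rw [hu]
    exact integral_sub (mono_integrableOn u₁ u₁.mono v₂ a b) (mono_integrableOn u₂ u₂.mono v₂ a b)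
  have e3 : (∫ x in Set.Ioc a b, Function.leftLim v x ∂u₁.measure)
      = (∫ x in Set.Ioc a b, leftLim v₁ x ∂u₁.measure)
        - (∫ x in Set.Ioc a b, leftLim v₂ x ∂u₁.measure) := by
    rw [hll]
    exact integral_sub (mono_integrableOn _ v₁.mono.leftLim u₁ a b)
      (mono_integrableOn _ v₂.mono.leftLim u₁ a b)
  have e4 : (∫ x in Set.Ioc a b, Function.leftLim v x ∂u₂.measure)
      = (∫ x in Set.Ioc a b, leftLim v₁ x ∂u₂.measure)
        - (∫ x in Set.Ioc a b, leftLim v₂ x ∂u₂.measure) := by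
    rw [hll]
    exact integral_sub (mono_integrableOn _ v₁.mono.leftLim u₂ a b)
      (mono_integrableOn _ v₂.mono.leftLim u₂ a b)
  have p11 := stieltjes_parts v₁ u₁ a b hab
  have p21 := stieltjes_parts v₁ u₂ a b hab
  have p12 := stieltjes_parts v₂ u₁ a b hab
  have p22 := stieltjes_parts v₂ u₂ a b hab
  rw [e1, e2, e3, e4]
  simp only [hu, hv]
  linear_combination p11 - p21 - p12 + p22
end

section
/- Let λ > λ' ≥ 0, let φ_μ(x) := (1+|x|)^μ, and let ψ : ℝ → ℝ be a càdlàg function with sup_x |ψ(x)| φ_{λ'}(x)^{-1} < ∞ (i.e., ψ ∈ D_{−λ'}). Suppose f, f₁, f₂, … are nondecreasing càdlàg functions on ℝ with total variation bounded by 1 such that sup_x |(f_n − f)(x)| φ_λ(x) → 0 as n → ∞, and such that ∫ φ_{λ'}(x) df(x) < ∞ and ∫ φ_{λ'}(x) df_n(x) < ∞ for all n. Then the integrals ∫ ψ(x) df(x) and ∫ ψ(x) df_n(x) exist, and ∫ ψ(x) df_n(x) → ∫ ψ(x) df(x) as n → ∞. -/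
open MeasureTheory Filter Set Function
open scoped ENNReal

lemma whb_measurable (ψ : ℝ → ℝ) (h : ∀ x, ContinuousWithinAt ψ (Set.Ici x) x) :
    Measurable ψ := by
  have happrox : ∀ m : ℕ, Measurable (fun x : ℝ => ψ (⌈(m + 1 : ℝ) * x⌉ / (m + 1))) := by
    intro m
    exact (measurable_from_top (f := fun k : ℤ => ψ (k / (m + 1)))).comp
      (Int.measurable_ceil.comp (measurable_const.mul measurable_id))
  apply measurable_of_tendsto_metrizable happrox
  rw [tendsto_pi_nhds]
  intro x
  apply (h x).tendsto.comp
  rw [tendsto_nhdsWithin_iff]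
  constructor
  · have hub : Tendsto (fun m : ℕ => x + 1 / (m + 1 : ℝ)) atTop (nhds x) := by
      simpa using tendsto_const_nhds.add (tendsto_one_div_add_atTop_nhds_zero_nat (𝕜 := ℝ))
    apply tendsto_of_tendsto_of_tendsto_of_le_of_le tendsto_const_nhds hub
    · intro m
      have : (m + 1 : ℝ) ≠ 0 := by positivity
      rw [le_div_iff₀ (by positivity)]
      have := Int.le_ceil ((m + 1 : ℝ) * x)
      linarith
    · intro m
      show (⌈((m:ℝ) + 1) * x⌉ : ℝ) / ((m:ℝ) + 1) ≤ x + 1 / ((m:ℝ) + 1)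
      rw [div_le_iff₀ (by positivity : (0:ℝ) < (m:ℝ) + 1)]
      have h2 := Int.ceil_lt_add_one ((m + 1 : ℝ) * x)
      have h3 : (0:ℝ) < (m:ℝ)+1 := by positivity
      have h5 : 1/((m:ℝ)+1) * ((m:ℝ)+1) = 1 := by field_simp
      nlinarith
  · apply Eventually.of_forall
    intro m
    simp only [mem_Ici]
    rw [le_div_iff₀ (by positivity : (0:ℝ) < (m:ℝ) + 1)]
    have := Int.le_ceil ((m + 1 : ℝ) * x)
    linarith

def whbGood (ψ : ℝ → ℝ) (a δ t : ℝ) : Prop :=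
  ∃ (n : ℕ) (u : ℕ → ℝ), Monotone u ∧ u 0 = a ∧ (∀ i, n ≤ i → u i = t) ∧
    ∀ i < n, ∀ x ∈ Set.Ico (u i) (u (i+1)), ∀ y ∈ Set.Ico (u i) (u (i+1)), |ψ x - ψ y| ≤ δ

lemma whbGood_refl (ψ : ℝ → ℝ) (a δ : ℝ) : whbGood ψ a δ a :=
  ⟨0, fun _ => a, monotone_const, rfl, fun _ _ => rfl, fun i hi => absurd hi (Nat.not_lt_zero i)⟩

lemma whbGood_extend {ψ : ℝ → ℝ} {a δ t t' : ℝ} (h : whbGood ψ a δ t) (htt' : t ≤ t')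
    (hosc : ∀ x ∈ Set.Ico t t', ∀ y ∈ Set.Ico t t', |ψ x - ψ y| ≤ δ) :
    whbGood ψ a δ t' := by
  obtain ⟨n, u, hu, h0, hn, hp⟩ := h
  refine ⟨n + 1, fun i => if i ≤ n then u i else t', ?_, ?_, ?_, ?_⟩
  · intro i j hij
    dsimp only
    split_ifs with hi hj hj
    · exact hu hij
    · calc u i ≤ u n := hu hi
        _ = t := hn n le_rfl
        _ ≤ t' := htt'
    · omega
    · exact le_rfl
  · show (if 0 ≤ n then u 0 else t') = a
    rw [if_pos (Nat.zero_le n), h0]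
  · intro i hi
    have : ¬ i ≤ n := by omega
    simp [this]
  · intro i hi x hx y hy
    simp only [mem_Ico] at hx hy
    by_cases hin : i < n
    · have e1 : (if i ≤ n then u i else t') = u i := if_pos (by omega)
      have e2 : (if i + 1 ≤ n then u (i+1) else t') = u (i+1) := if_pos (by omega)
      rw [e1, e2] at hx hy
      exact hp i hin x (by simpa using hx) y (by simpa using hy)
    · have hieq : i = n := by omega
      subst hieq
      have e1 : (if i ≤ i then u i else t') = t := by rw [if_pos le_rfl]; exact hn i le_rfl
      have e2 : (if i + 1 ≤ i then u (i+1) else t') = t' := if_neg (by omega)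
      rw [e1, e2] at hx hy
      exact hosc x (by simpa using hx) y (by simpa using hy)

lemma whb_partition (ψ : ℝ → ℝ)
    (hrc : ∀ x, ContinuousWithinAt ψ (Set.Ici x) x)
    (hll : ∀ x : ℝ, ∃ l : ℝ, Tendsto ψ (nhdsWithin x (Set.Iio x)) (nhds l))
    (a b δ : ℝ) (hab : a ≤ b) (hδ : 0 < δ) : whbGood ψ a δ b := by
  set S : Set ℝ := {t | t ∈ Set.Icc a b ∧ whbGood ψ a δ t} with hS
  have haS : a ∈ S := ⟨⟨le_rfl, hab⟩, whbGood_refl ψ a δ⟩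
  have hSne : S.Nonempty := ⟨a, haS⟩
  have hSbdd : BddAbove S := ⟨b, fun t ht => ht.1.2⟩
  set c := sSup S with hc
  have hac : a ≤ c := le_csSup hSbdd haS
  have hcb : c ≤ b := csSup_le hSne (fun t ht => ht.1.2)
  -- c ∈ S
  have hcS : c ∈ S := by
    obtain ⟨l, hl⟩ := hll c
    have hev : ∀ᶠ y in nhdsWithin c (Set.Iio c), |ψ y - l| < δ/2 := by
      have := Metric.tendsto_nhds.mp hl (δ/2) (by linarith)
      filter_upwards [this] with y hy
      simpa [Real.dist_eq] using hy
    rcases eq_or_lt_of_le hac with heq | hlt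
    · exact heq ▸ haS
    · obtain ⟨a', ha', hsub⟩ := mem_nhdsLT_iff_exists_Ioo_subset.mp hev
      set a'' := max a' a with ha''
      have ha''c : a'' < c := max_lt ha' hlt
      obtain ⟨t, htS, hta⟩ := exists_lt_of_lt_csSup hSne ha''c
      have htc : t ≤ c := le_csSup hSbdd htS
      refine ⟨⟨hac, hcb⟩, whbGood_extend htS.2 htc ?_⟩
      intro x hx y hy
      simp only [mem_Ico] at hx hy
      have hax : ∀ z : ℝ, t ≤ z → z < c → |ψ z - l| < δ/2 := by
        intro z h1 h2
        exact hsub ⟨lt_of_le_of_lt (le_max_left a' a) (lt_of_lt_of_le hta h1), h2⟩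
      have hx' := hax x hx.1 hx.2
      have hy' := hax y hy.1 hy.2
      have h3 := abs_sub_le (ψ x) l (ψ y)
      rw [abs_sub_comm l (ψ y)] at h3
      linarith
  rcases eq_or_lt_of_le hcb with heq | hlt
  · exact heq ▸ hcS.2
  · exfalso
    have hev : ∀ᶠ y in nhdsWithin c (Set.Ici c), |ψ y - ψ c| < δ/2 := by
      have := Metric.tendsto_nhds.mp (hrc c).tendsto (δ/2) (by linarith)
      filter_upwards [this] with y hy
      simpa [Real.dist_eq] using hy
    obtain ⟨u₀, hu₀, hsub⟩ := mem_nhdsGE_iff_exists_Ico_subset.mp hev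
    have hu₀' : c < u₀ := hu₀
    set t' := min b u₀ with ht'
    have hct' : c < t' := lt_min hlt hu₀'
    have ht'S : t' ∈ S := by
      refine ⟨⟨hac.trans hct'.le, min_le_left _ _⟩, whbGood_extend hcS.2 hct'.le ?_⟩
      intro x hx y hy
      simp only [mem_Ico] at hx hy
      have hax : ∀ z : ℝ, c ≤ z → z < t' → |ψ z - ψ c| < δ/2 := by
        intro z h1 h2
        exact hsub ⟨h1, lt_of_lt_of_le h2 (min_le_right _ _)⟩
      have hx' := hax x hx.1 hx.2
      have hy' := hax y hy.1 hy.2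
      have h3 := abs_sub_le (ψ x) (ψ c) (ψ y)
      rw [abs_sub_comm (ψ c) (ψ y)] at h3
      linarith
    have : t' ≤ c := le_csSup hSbdd ht'S
    linarith

lemma whb_blocks (μ ν : Measure ℝ) (g : ℝ → ℝ≥0∞) (hg : Measurable g)
    (s : ℕ → Set ℝ) (hmeas : ∀ k, MeasurableSet (s k)) (hdisj : Pairwise (Disjoint on s))
    (w e : ℕ → ℝ≥0∞) (K : ℝ≥0∞)
    (hup : ∀ k, ∀ x ∈ s k, g x ≤ w k)
    (hlow : ∀ k, ∀ x ∈ s k, w k ≤ K * g x)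
    (hνμ : ∀ k, ν (s k) ≤ μ (s k) + e k) :
    ∫⁻ x in ⋃ k, s k, g x ∂ν ≤ K * ∫⁻ x in ⋃ k, s k, g x ∂μ + ∑' k, w k * e k := by
  rw [lintegral_iUnion hmeas hdisj, lintegral_iUnion hmeas hdisj, ← ENNReal.tsum_mul_left,
    ← ENNReal.tsum_add]
  apply ENNReal.tsum_le_tsum
  intro k
  calc ∫⁻ x in s k, g x ∂ν ≤ ∫⁻ _ in s k, w k ∂ν := setLIntegral_mono' (hmeas k)
        (fun x hx => hup k x hx)
    _ = w k * ν (s k) := setLIntegral_const _ _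
    _ ≤ w k * (μ (s k) + e k) := mul_le_mul_right (hνμ k) _
    _ = w k * μ (s k) + w k * e k := mul_add _ _ _
    _ ≤ K * ∫⁻ x in s k, g x ∂μ + w k * e k := by
        apply add_le_add_left
        calc w k * μ (s k) = ∫⁻ _ in s k, w k ∂μ := (setLIntegral_const _ _).symm
          _ ≤ ∫⁻ x in s k, K * g x ∂μ := setLIntegral_mono' (hmeas k)
              (fun x hx => hlow k x hx)
          _ = K * ∫⁻ x in s k, g x ∂μ := lintegral_const_mul _ hg

lemma whb_wt_anti {lam B t : ℝ} (hlam : 0 ≤ lam) (hB : 0 ≤ B) (hBt : B ≤ t) :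
    (1 + t) ^ (-lam) ≤ (1 + B) ^ (-lam) :=
  Real.rpow_le_rpow_of_nonpos (by linarith) (by linarith) (neg_nonpos.mpr hlam)

lemma whb_block_est (f fn : StieltjesFunction ℝ) (lam ε : ℝ) (c d B : ℝ)
    (hc : B ≤ |c|) (hd : B ≤ |d|) (hB : 0 ≤ B) (hl : 0 ≤ lam) (hε : 0 ≤ ε)
    (hcl : ∀ x, |fn x - f x| ≤ ε * (1 + |x|) ^ (-lam)) :
    fn.measure (Set.Ioc c d) ≤ f.measure (Set.Ioc c d)
      + ENNReal.ofReal (2 * ε * (1 + B) ^ (-lam)) := by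
  rw [StieltjesFunction.measure_Ioc, StieltjesFunction.measure_Ioc]
  have h1 : |fn c - f c| ≤ ε * (1 + B) ^ (-lam) :=
    (hcl c).trans (by
      have := whb_wt_anti hl hB hc
      nlinarith [Real.rpow_nonneg (by positivity : (0:ℝ) ≤ 1 + |c|) (-lam)])
  have h2 : |fn d - f d| ≤ ε * (1 + B) ^ (-lam) :=
    (hcl d).trans (by
      have := whb_wt_anti hl hB hd
      nlinarith [Real.rpow_nonneg (by positivity : (0:ℝ) ≤ 1 + |d|) (-lam)])
  calc ENNReal.ofReal (fn d - fn c)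
      ≤ ENNReal.ofReal ((f d - f c) + 2 * ε * (1 + B) ^ (-lam)) := by
        apply ENNReal.ofReal_le_ofReal
        have h1' := abs_le.mp h1
        have h2' := abs_le.mp h2
        linarith [h1'.1, h1'.2, h2'.1, h2'.2]
    _ ≤ _ := ENNReal.ofReal_add_le

lemma whb_union_right {A : ℝ} (hA : 1 ≤ A) :
    (⋃ k : ℕ, Set.Ioc ((2:ℝ)^k * A) (2^(k+1) * A)) = Set.Ioi A := by
  ext x
  simp only [mem_iUnion, mem_Ioc, mem_Ioi]
  constructor
  · rintro ⟨k, h1, _⟩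
    have h2 : (1:ℝ) ≤ 2^k := one_le_pow₀ one_le_two
    nlinarith
  · intro hx
    have hex : ∃ k : ℕ, x ≤ 2^(k+1) * A := by
      obtain ⟨n, hn⟩ := pow_unbounded_of_one_lt x (y := (2:ℝ)) one_lt_two
      have p1 : (1:ℝ) ≤ 2^n := one_le_pow₀ one_le_two
      have p2 : (1:ℝ) ≤ 2^(n+1) := one_le_pow₀ one_le_two
      have p3 : (2:ℝ)^n ≤ 2^(n+1) := by rw [pow_succ]; nlinarith
      exact ⟨n, le_trans hn.le (by nlinarith)⟩
    classical
    refine ⟨Nat.find hex, ?_, Nat.find_spec hex⟩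
    rcases Nat.eq_zero_or_pos (Nat.find hex) with h0 | hpos
    · rw [h0]; simpa using hx
    · obtain ⟨m, hm⟩ := Nat.exists_eq_add_of_lt hpos
      have := Nat.find_min hex (m := m) (by omega)
      push_neg at this
      have : (2:ℝ)^(m+1) * A < x := this
      calc (2:ℝ)^(Nat.find hex) * A = 2^(m+1) * A := by rw [hm, zero_add]
        _ < x := this

lemma whb_union_left {A : ℝ} (hA : 1 ≤ A) :
    (⋃ k : ℕ, Set.Ioc (-((2:ℝ)^(k+1) * A)) (-(2^k * A))) = Set.Iic (-A) := by
  ext x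
  simp only [mem_iUnion, mem_Ioc, mem_Iic]
  constructor
  · rintro ⟨k, _, h2⟩
    have h3 : (1:ℝ) ≤ 2^k := one_le_pow₀ one_le_two
    nlinarith
  · intro hx
    have hex : ∃ k : ℕ, -((2:ℝ)^(k+1) * A) < x := by
      obtain ⟨n, hn⟩ := pow_unbounded_of_one_lt (-x) (y := (2:ℝ)) one_lt_two
      have p1 : (1:ℝ) ≤ 2^n := one_le_pow₀ one_le_two
      have p2 : (1:ℝ) ≤ 2^(n+1) := one_le_pow₀ one_le_two
      have p3 : (2:ℝ)^n ≤ 2^(n+1) := by rw [pow_succ]; nlinarith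
      refine ⟨n, by nlinarith⟩
    classical
    refine ⟨Nat.find hex, Nat.find_spec hex, ?_⟩
    rcases Nat.eq_zero_or_pos (Nat.find hex) with h0 | hpos
    · rw [h0]; simpa using hx
    · obtain ⟨m, hm⟩ := Nat.exists_eq_add_of_lt hpos
      have := Nat.find_min hex (m := m) (by omega)
      push_neg at this
      calc x ≤ -((2:ℝ)^(m+1) * A) := this
        _ = -(2^(Nat.find hex) * A) := by rw [hm, zero_add]

lemma whb_tail (f fn : StieltjesFunction ℝ) (lam lam' ε A : ℝ) (hA : 1 ≤ A) (hε : 0 ≤ ε)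
    (hlam : lam' < lam) (hlam' : 0 ≤ lam')
    (hcl : ∀ x, |fn x - f x| ≤ ε * (1 + |x|) ^ (-lam)) :
    ∫⁻ x in (Set.Ioc (-A) A)ᶜ, ENNReal.ofReal ((1 + |x|) ^ lam') ∂fn.measure
      ≤ ENNReal.ofReal (2 ^ lam')
          * ∫⁻ x in (Set.Ioc (-A) A)ᶜ, ENNReal.ofReal ((1 + |x|) ^ lam') ∂f.measure
        + ENNReal.ofReal (ε * (4 * 2 ^ lam' * (1 - 2 ^ (lam' - lam))⁻¹)) := by
  have hl : 0 ≤ lam := hlam'.trans hlam.le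
  set g : ℝ → ℝ≥0∞ := fun x => ENNReal.ofReal ((1 + |x|) ^ lam') with hgdef
  have hg : Measurable g := by
    apply ENNReal.measurable_ofReal.comp
    exact ((continuous_const.add continuous_abs).rpow_const
      (fun x => Or.inl (by positivity : (1:ℝ) + |x| ≠ 0))).measurable
  set K : ℝ≥0∞ := ENNReal.ofReal (2 ^ lam') with hK
  set w : ℕ → ℝ≥0∞ := fun k => ENNReal.ofReal ((1 + 2^(k+1) * A) ^ lam') with hw
  set e : ℕ → ℝ≥0∞ := fun k => ENNReal.ofReal (2 * ε * (1 + 2^k * A) ^ (-lam)) with he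
  have hApos : (0:ℝ) < A := lt_of_lt_of_le one_pos hA
  have hpowpos : ∀ k : ℕ, (0:ℝ) < 2^k * A := fun k => by positivity
  have hmono : ∀ i j : ℕ, i ≤ j → (2:ℝ)^i * A ≤ 2^j * A := fun i j h =>
    mul_le_mul_of_nonneg_right (pow_le_pow_right₀ one_le_two h) hApos.le
  -- the series bound
  set c2 : ℝ := 2 ^ (lam' - lam) with hc2
  have hc2nn : 0 ≤ c2 := Real.rpow_nonneg (by norm_num) _
  have hc2lt : c2 < 1 := Real.rpow_lt_one_of_one_lt_of_neg one_lt_two (by linarith)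
  have hterm : ∀ k : ℕ, w k * e k ≤ ENNReal.ofReal (2 * ε * 2 ^ lam') *
      (ENNReal.ofReal c2) ^ k := by
    intro k
    have hB := hpowpos k
    have a1 : (1 + 2^(k+1) * A) ^ lam' ≤ 2 ^ lam' * (1 + 2^k * A) ^ lam' := by
      rw [← Real.mul_rpow (by norm_num) (by positivity)]
      apply Real.rpow_le_rpow (by positivity) (by rw [pow_succ]; ring_nf; nlinarith) hlam'
    have a2 : (1 + 2^k * A) ^ lam' * (1 + 2^k * A) ^ (-lam) = (1 + 2^k * A) ^ (lam' - lam) := by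
      rw [sub_eq_add_neg, Real.rpow_add (by positivity)]
    have a3 : (1 + 2^k * A) ^ (lam' - lam) ≤ ((2:ℝ)^k) ^ (lam' - lam) := by
      apply Real.rpow_le_rpow_of_nonpos (by positivity)
      · nlinarith [one_le_pow₀ (a := (2:ℝ)) one_le_two (n := k)]
      · linarith
    have a4 : ((2:ℝ)^k) ^ (lam' - lam) = c2 ^ k := by
      rw [← Real.rpow_natCast 2 k, ← Real.rpow_mul (by norm_num), mul_comm,
        Real.rpow_mul (by norm_num), Real.rpow_natCast]
    have key : (1 + 2^(k+1) * A) ^ lam' * (2 * ε * (1 + 2^k * A) ^ (-lam))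
        ≤ 2 * ε * 2 ^ lam' * c2 ^ k := by
      have n1 : (0:ℝ) ≤ (1 + 2^k * A) ^ (-lam) := Real.rpow_nonneg (by positivity) _
      have n2 : (0:ℝ) ≤ (1 + 2^k * A) ^ lam' := Real.rpow_nonneg (by positivity) _
      have n3 : (0:ℝ) ≤ 2 ^ lam' := Real.rpow_nonneg (by norm_num) _
      calc (1 + 2^(k+1) * A) ^ lam' * (2 * ε * (1 + 2^k * A) ^ (-lam))
          ≤ (2 ^ lam' * (1 + 2^k * A) ^ lam') * (2 * ε * (1 + 2^k * A) ^ (-lam)) := by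
            apply mul_le_mul_of_nonneg_right a1 (by positivity)
        _ = 2 * ε * 2 ^ lam' * ((1 + 2^k * A) ^ lam' * (1 + 2^k * A) ^ (-lam)) := by ring
        _ = 2 * ε * 2 ^ lam' * (1 + 2^k * A) ^ (lam' - lam) := by rw [a2]
        _ ≤ 2 * ε * 2 ^ lam' * c2 ^ k := by
            rw [← a4]
            apply mul_le_mul_of_nonneg_left a3 (by positivity)
    calc w k * e k = ENNReal.ofReal ((1 + 2^(k+1) * A) ^ lam' * (2 * ε * (1 + 2^k * A) ^ (-lam))) := by
          rw [hw, he, ← ENNReal.ofReal_mul (Real.rpow_nonneg (by positivity) _)]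
      _ ≤ ENNReal.ofReal (2 * ε * 2 ^ lam' * c2 ^ k) := ENNReal.ofReal_le_ofReal key
      _ = ENNReal.ofReal (2 * ε * 2 ^ lam') * (ENNReal.ofReal c2) ^ k := by
          rw [ENNReal.ofReal_mul (by positivity), ENNReal.ofReal_pow hc2nn]
  have hsum : ∑' k, w k * e k ≤ ENNReal.ofReal (2 * ε * 2 ^ lam' * (1 - c2)⁻¹) := by
    calc ∑' k, w k * e k ≤ ∑' k, ENNReal.ofReal (2 * ε * 2 ^ lam') * (ENNReal.ofReal c2) ^ k :=
          ENNReal.tsum_le_tsum hterm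
      _ = ENNReal.ofReal (2 * ε * 2 ^ lam') * ∑' k, (ENNReal.ofReal c2) ^ k :=
          ENNReal.tsum_mul_left
      _ = ENNReal.ofReal (2 * ε * 2 ^ lam') * (1 - ENNReal.ofReal c2)⁻¹ := by
          rw [ENNReal.tsum_geometric]
      _ = ENNReal.ofReal (2 * ε * 2 ^ lam') * ENNReal.ofReal ((1 - c2)⁻¹) := by
          rw [← ENNReal.ofReal_one, ← ENNReal.ofReal_sub _ hc2nn,
            ENNReal.ofReal_inv_of_pos (by linarith)]
      _ = ENNReal.ofReal (2 * ε * 2 ^ lam' * (1 - c2)⁻¹) := by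
          rw [← ENNReal.ofReal_mul (by positivity)]
  -- right tail
  have hR : ∫⁻ x in Set.Ioi A, g x ∂fn.measure
      ≤ K * ∫⁻ x in Set.Ioi A, g x ∂f.measure + ∑' k, w k * e k := by
    rw [← whb_union_right hA]
    apply whb_blocks _ _ _ hg _ (fun k => measurableSet_Ioc)
    · intro i j hij
      simp only [Function.onFun]
      rw [Set.Ioc_disjoint_Ioc]
      rcases lt_or_gt_of_ne hij with h | h
      · exact le_trans (min_le_left _ _) (le_trans (hmono _ _ h) (le_max_right _ _))
      · exact le_trans (min_le_right _ _) (le_trans (hmono _ _ h) (le_max_left _ _))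
    · intro k x hx
      simp only [mem_Ioc] at hx
      have hxpos : 0 < x := (hpowpos k).trans hx.1
      apply ENNReal.ofReal_le_ofReal
      apply Real.rpow_le_rpow (by positivity) ?_ hlam'
      rw [abs_of_pos hxpos]; linarith [hx.2]
    · intro k x hx
      simp only [mem_Ioc] at hx
      have hxpos : 0 < x := (hpowpos k).trans hx.1
      rw [hK, ← ENNReal.ofReal_mul (Real.rpow_nonneg (by norm_num) _)]
      apply ENNReal.ofReal_le_ofReal
      calc (1 + 2^(k+1) * A) ^ lam' ≤ 2 ^ lam' * (1 + 2^k * A) ^ lam' := by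
            rw [← Real.mul_rpow (by norm_num) (by positivity)]
            apply Real.rpow_le_rpow (by positivity) (by rw [pow_succ]; nlinarith [hpowpos k]) hlam'
        _ ≤ 2 ^ lam' * (1 + |x|) ^ lam' := by
            apply mul_le_mul_of_nonneg_left ?_ (Real.rpow_nonneg (by norm_num) _)
            apply Real.rpow_le_rpow (by positivity) ?_ hlam'
            rw [abs_of_pos hxpos]; linarith [hx.1]
    · intro k
      apply whb_block_est f fn lam ε _ _ (2^k * A) (le_abs_self _)
        (le_trans (hmono k (k+1) (by omega)) (le_abs_self _)) (hpowpos k).le hl hε hcl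
  -- left tail
  have hL : ∫⁻ x in Set.Iic (-A), g x ∂fn.measure
      ≤ K * ∫⁻ x in Set.Iic (-A), g x ∂f.measure + ∑' k, w k * e k := by
    rw [← whb_union_left hA]
    apply whb_blocks _ _ _ hg _ (fun k => measurableSet_Ioc)
    · intro i j hij
      simp only [Function.onFun]
      rw [Set.Ioc_disjoint_Ioc]
      rcases lt_or_gt_of_ne hij with h | h
      · refine le_trans (min_le_right _ _) (le_trans ?_ (le_max_left _ _))
        simp only [neg_le_neg_iff]
        exact hmono _ _ h
      · refine le_trans (min_le_left _ _) (le_trans ?_ (le_max_right _ _))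
        simp only [neg_le_neg_iff]
        exact hmono _ _ h
    · intro k x hx
      simp only [mem_Ioc] at hx
      have hxneg : x < 0 := lt_of_le_of_lt hx.2 (by simpa using hpowpos k)
      apply ENNReal.ofReal_le_ofReal
      apply Real.rpow_le_rpow (by positivity) ?_ hlam'
      rw [abs_of_neg hxneg]; linarith [hx.1]
    · intro k x hx
      simp only [mem_Ioc] at hx
      have hxneg : x < 0 := lt_of_le_of_lt hx.2 (by simpa using hpowpos k)
      rw [hK, ← ENNReal.ofReal_mul (Real.rpow_nonneg (by norm_num) _)]
      apply ENNReal.ofReal_le_ofReal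
      calc (1 + 2^(k+1) * A) ^ lam' ≤ 2 ^ lam' * (1 + 2^k * A) ^ lam' := by
            rw [← Real.mul_rpow (by norm_num) (by positivity)]
            apply Real.rpow_le_rpow (by positivity) (by rw [pow_succ]; nlinarith [hpowpos k]) hlam'
        _ ≤ 2 ^ lam' * (1 + |x|) ^ lam' := by
            apply mul_le_mul_of_nonneg_left ?_ (Real.rpow_nonneg (by norm_num) _)
            apply Real.rpow_le_rpow (by positivity) ?_ hlam'
            rw [abs_of_neg hxneg]; linarith [hx.2]
    · intro k
      apply whb_block_est f fn lam ε _ _ (2^k * A) ?_ ?_ (hpowpos k).le hl hε hcl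
      · rw [abs_neg]
        exact le_trans (hmono k (k+1) (by omega)) (le_abs_self _)
      · rw [abs_neg]
        exact le_abs_self _
  -- assemble
  have hset : (Set.Ioc (-A) A)ᶜ = Set.Iic (-A) ∪ Set.Ioi A := by
    ext x
    simp only [Set.mem_compl_iff, Set.mem_Ioc, Set.mem_union, Set.mem_Iic, Set.mem_Ioi]
    constructor
    · intro hx; by_contra hc; push_neg at hc; exact hx hc
    · rintro (h1 | h1) ⟨h2, h3⟩ <;> linarith
  have hdisj2 : Disjoint (Set.Iic (-A)) (Set.Ioi A) := Iic_disjoint_Ioi (by linarith)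
  rw [hset, lintegral_union measurableSet_Ioi hdisj2, lintegral_union measurableSet_Ioi hdisj2]
  calc (∫⁻ x in Set.Iic (-A), g x ∂fn.measure) + ∫⁻ x in Set.Ioi A, g x ∂fn.measure
      ≤ (K * ∫⁻ x in Set.Iic (-A), g x ∂f.measure + ∑' k, w k * e k)
        + (K * ∫⁻ x in Set.Ioi A, g x ∂f.measure + ∑' k, w k * e k) := add_le_add hL hR
    _ = K * ((∫⁻ x in Set.Iic (-A), g x ∂f.measure) + ∫⁻ x in Set.Ioi A, g x ∂f.measure)
        + ((∑' k, w k * e k) + ∑' k, w k * e k) := by ring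
    _ ≤ K * ((∫⁻ x in Set.Iic (-A), g x ∂f.measure) + ∫⁻ x in Set.Ioi A, g x ∂f.measure)
        + ENNReal.ofReal (ε * (4 * 2 ^ lam' * (1 - c2)⁻¹)) := by
          apply add_le_add_right
          calc (∑' k, w k * e k) + ∑' k, w k * e k
              ≤ ENNReal.ofReal (2 * ε * 2 ^ lam' * (1 - c2)⁻¹)
                + ENNReal.ofReal (2 * ε * 2 ^ lam' * (1 - c2)⁻¹) := add_le_add hsum hsum
            _ = ENNReal.ofReal (ε * (4 * 2 ^ lam' * (1 - c2)⁻¹)) := by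
                have h1c2 : (0:ℝ) ≤ (1 - c2)⁻¹ := inv_nonneg.mpr (by linarith)
                have hnn : (0:ℝ) ≤ 2 * ε * 2 ^ lam' * (1 - c2)⁻¹ :=
                  mul_nonneg (by positivity) h1c2
                rw [← ENNReal.ofReal_add hnn hnn]
                congr 1
                ring

lemma whb_leftLim_bd {f fm : StieltjesFunction ℝ} {ε : ℝ}
    (hbd : ∀ x, |fm x - f x| ≤ ε) (t : ℝ) :
    |leftLim fm t - leftLim f t| ≤ ε := by
  have h1 : Tendsto (fun x => fm x - f x) (nhdsWithin t (Set.Iio t)) 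
      (nhds (leftLim fm t - leftLim f t)) :=
    (fm.mono.tendsto_leftLim t).sub (f.mono.tendsto_leftLim t)
  exact le_of_tendsto h1.abs (Eventually.of_forall fun x => hbd x)

lemma whb_cell (ψ : ℝ → ℝ) (f fm : StieltjesFunction ℝ)
    (hint : Integrable ψ f.measure) (hintm : Integrable ψ fm.measure)
    (ε δ₂ CA : ℝ) (hε : 0 ≤ ε) (hδ₂ : 0 ≤ δ₂) (hCA : 0 ≤ CA)
    (c d : ℝ) (hcd : c ≤ d)
    (hosc : ∀ x ∈ Set.Ico c d, ∀ y ∈ Set.Ico c d, |ψ x - ψ y| ≤ δ₂)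
    (hc : |ψ c| ≤ CA) (hd : |ψ d| ≤ CA)
    (hbd : ∀ x, |fm x - f x| ≤ ε) :
    |(∫ x in Set.Ioc c d, ψ x ∂fm.measure) - ∫ x in Set.Ioc c d, ψ x ∂f.measure|
      ≤ 4 * CA * ε + δ₂ * ((fm d - fm c) + (f d - f c)) := by
  have hbdL := whb_leftLim_bd hbd
  rcases eq_or_lt_of_le hcd with heq | hlt
  · subst heq
    simp only [Set.Ioc_self, Measure.restrict_empty, integral_zero_measure, sub_zero, sub_self,
      abs_zero]
    positivity
  -- general facts for a Stieltjes function
  have key : ∀ g : StieltjesFunction ℝ, ∀ hgint : Integrable ψ g.measure,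
      |(∫ x in Set.Ioc c d, ψ x ∂g.measure)
        - (ψ c * (leftLim g d - g c) + ψ d * (g d - leftLim g d))|
        ≤ δ₂ * (g d - g c) := by
    intro g hgint
    have hccd : g c ≤ leftLim g d := g.mono.le_leftLim hlt
    have hlld : leftLim g d ≤ g d := g.mono.leftLim_le le_rfl
    have hIoo : (g.measure (Set.Ioo c d)).toReal = leftLim g d - g c := by
      rw [StieltjesFunction.measure_Ioo, ENNReal.toReal_ofReal (by linarith)]
    have hsing : (g.measure {d}).toReal = g d - leftLim g d := by
      rw [StieltjesFunction.measure_singleton, ENNReal.toReal_ofReal (by linarith)]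
    have hsplit : ∫ x in Set.Ioc c d, ψ x ∂g.measure
        = (∫ x in Set.Ioo c d, ψ x ∂g.measure) + ψ d * (g d - leftLim g d) := by
      rw [← Set.Ioo_union_right hlt, setIntegral_union (by simp) (measurableSet_singleton d)
        hgint.integrableOn hgint.integrableOn, integral_singleton, measureReal_def, hsing, smul_eq_mul, mul_comm]
    have hfin : g.measure (Set.Ioo c d) < ⊤ := by
      rw [StieltjesFunction.measure_Ioo]; exact ENNReal.ofReal_lt_top
    have hIoosub : |(∫ x in Set.Ioo c d, ψ x ∂g.measure) - ψ c * (leftLim g d - g c)|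
        ≤ δ₂ * (leftLim g d - g c) := by
      have h1 : (∫ x in Set.Ioo c d, ψ x ∂g.measure) - ψ c * (leftLim g d - g c)
          = ∫ x in Set.Ioo c d, (ψ x - ψ c) ∂g.measure := by
        rw [integral_sub hgint.integrableOn (integrableOn_const hfin.ne),
          setIntegral_const, measureReal_def, hIoo, smul_eq_mul]
        ring
      rw [h1, ← Real.norm_eq_abs, ← hIoo]
      apply norm_setIntegral_le_of_norm_le_const hfin
      intro x hx
      rw [Real.norm_eq_abs]
      exact hosc x (Set.Ioo_subset_Ico_self hx) c ⟨le_rfl, hlt⟩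
    calc |(∫ x in Set.Ioc c d, ψ x ∂g.measure)
        - (ψ c * (leftLim g d - g c) + ψ d * (g d - leftLim g d))|
        = |(∫ x in Set.Ioo c d, ψ x ∂g.measure) - ψ c * (leftLim g d - g c)| := by
          rw [hsplit]; ring_nf
      _ ≤ δ₂ * (leftLim g d - g c) := hIoosub
      _ ≤ δ₂ * (g d - g c) := by apply mul_le_mul_of_nonneg_left (by linarith) hδ₂
  have h1 := key f hint
  have h2 := key fm hintm
  -- compare main terms
  have e1 : |(ψ c * (leftLim fm d - fm c) + ψ d * (fm d - leftLim fm d))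
      - (ψ c * (leftLim f d - f c) + ψ d * (f d - leftLim f d))| ≤ 4 * CA * ε := by
    have b1 : |fm c - f c| ≤ ε := hbd c
    have b2 : |fm d - f d| ≤ ε := hbd d
    have b3 : |leftLim fm d - leftLim f d| ≤ ε := hbdL d
    have expand : (ψ c * (leftLim fm d - fm c) + ψ d * (fm d - leftLim fm d))
        - (ψ c * (leftLim f d - f c) + ψ d * (f d - leftLim f d))
        = ψ c * ((leftLim fm d - leftLim f d) - (fm c - f c))
          + ψ d * ((fm d - f d) - (leftLim fm d - leftLim f d)) := by ring
    rw [expand]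
    have t1 : |ψ c * ((leftLim fm d - leftLim f d) - (fm c - f c))| ≤ CA * (2 * ε) := by
      rw [abs_mul]
      apply mul_le_mul hc ?_ (abs_nonneg _) hCA
      calc |(leftLim fm d - leftLim f d) - (fm c - f c)|
          ≤ |leftLim fm d - leftLim f d| + |fm c - f c| := abs_sub _ _
        _ ≤ 2 * ε := by linarith
    have t2 : |ψ d * ((fm d - f d) - (leftLim fm d - leftLim f d))| ≤ CA * (2 * ε) := by
      rw [abs_mul]
      apply mul_le_mul hd ?_ (abs_nonneg _) hCA
      calc |(fm d - f d) - (leftLim fm d - leftLim f d)|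
          ≤ |fm d - f d| + |leftLim fm d - leftLim f d| := abs_sub _ _
        _ ≤ 2 * ε := by linarith
    calc |ψ c * ((leftLim fm d - leftLim f d) - (fm c - f c))
          + ψ d * ((fm d - f d) - (leftLim fm d - leftLim f d))|
        ≤ _ + _ := abs_add_le _ _
      _ ≤ CA * (2 * ε) + CA * (2 * ε) := add_le_add t1 t2
      _ = 4 * CA * ε := by ring
  set Im := ∫ x in Set.Ioc c d, ψ x ∂fm.measure
  set I := ∫ x in Set.Ioc c d, ψ x ∂f.measure
  set Mm := ψ c * (leftLim fm d - fm c) + ψ d * (fm d - leftLim fm d)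
  set M := ψ c * (leftLim f d - f c) + ψ d * (f d - leftLim f d)
  have habs1 : |Im - I| ≤ |Im - Mm| + |Mm - M| + |M - I| := by
    calc |Im - I| ≤ |Im - Mm| + |Mm - I| := abs_sub_le _ _ _
      _ ≤ |Im - Mm| + (|Mm - M| + |M - I|) := by
          apply add_le_add_right (abs_sub_le _ _ _)
      _ = _ := by ring
  have hMI : |M - I| = |I - M| := abs_sub_comm _ _
  rw [hMI] at habs1
  calc |Im - I| ≤ |Im - Mm| + |Mm - M| + |I - M| := habs1
    _ ≤ δ₂ * (fm d - fm c) + 4 * CA * ε + δ₂ * (f d - f c) := by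
        apply add_le_add (add_le_add h2 e1) h1
    _ = 4 * CA * ε + δ₂ * ((fm d - fm c) + (f d - f c)) := by ring

lemma whb_sum_Ioc (ψ : ℝ → ℝ) (f : StieltjesFunction ℝ) (hint : Integrable ψ f.measure)
    (u : ℕ → ℝ) (hu : Monotone u) (n : ℕ) :
    ∫ x in Set.Ioc (u 0) (u n), ψ x ∂f.measure
      = ∑ i ∈ Finset.range n, ∫ x in Set.Ioc (u i) (u (i+1)), ψ x ∂f.measure := by
  induction n with
  | zero => simp
  | succ n ih =>
    rw [Finset.sum_range_succ, ← ih, ← setIntegral_union (Set.Ioc_disjoint_Ioc_of_le le_rfl)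
      measurableSet_Ioc hint.integrableOn hint.integrableOn,
      Set.Ioc_union_Ioc_eq_Ioc (hu (Nat.zero_le n)) (hu (Nat.le_succ n))]

lemma whb_mid (ψ : ℝ → ℝ) (f fm : StieltjesFunction ℝ)
    (hint : Integrable ψ f.measure) (hintm : Integrable ψ fm.measure)
    (ε δ₂ CA : ℝ) (hε : 0 ≤ ε) (hδ₂ : 0 ≤ δ₂) (hCA : 0 ≤ CA)
    (n : ℕ) (u : ℕ → ℝ) (hu : Monotone u)
    (hosc : ∀ i < n, ∀ x ∈ Set.Ico (u i) (u (i+1)), ∀ y ∈ Set.Ico (u i) (u (i+1)),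
      |ψ x - ψ y| ≤ δ₂)
    (hCAi : ∀ i, i ≤ n → |ψ (u i)| ≤ CA)
    (hbd : ∀ x, |fm x - f x| ≤ ε)
    (hmass : f (u n) - f (u 0) ≤ 1) (hmassm : fm (u n) - fm (u 0) ≤ 1) :
    |(∫ x in Set.Ioc (u 0) (u n), ψ x ∂fm.measure)
        - ∫ x in Set.Ioc (u 0) (u n), ψ x ∂f.measure|
      ≤ 4 * n * CA * ε + 2 * δ₂ := by
  rw [whb_sum_Ioc ψ fm hintm u hu n, whb_sum_Ioc ψ f hint u hu n, ← Finset.sum_sub_distrib]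
  have s1 : ∑ i ∈ Finset.range n, (fm (u (i+1)) - fm (u i)) = fm (u n) - fm (u 0) :=
    Finset.sum_range_sub (fun i => fm (u i)) n
  have s2 : ∑ i ∈ Finset.range n, (f (u (i+1)) - f (u i)) = f (u n) - f (u 0) :=
    Finset.sum_range_sub (fun i => f (u i)) n
  calc |∑ i ∈ Finset.range n, ((∫ x in Set.Ioc (u i) (u (i+1)), ψ x ∂fm.measure)
          - ∫ x in Set.Ioc (u i) (u (i+1)), ψ x ∂f.measure)|
      ≤ ∑ i ∈ Finset.range n, |(∫ x in Set.Ioc (u i) (u (i+1)), ψ x ∂fm.measure)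
          - ∫ x in Set.Ioc (u i) (u (i+1)), ψ x ∂f.measure| :=
        Finset.abs_sum_le_sum_abs _ _
    _ ≤ ∑ i ∈ Finset.range n, (4 * CA * ε
          + δ₂ * ((fm (u (i+1)) - fm (u i)) + (f (u (i+1)) - f (u i)))) := by
        apply Finset.sum_le_sum
        intro i hi
        rw [Finset.mem_range] at hi
        exact whb_cell ψ f fm hint hintm ε δ₂ CA hε hδ₂ hCA (u i) (u (i+1))
          (hu (Nat.le_succ i)) (hosc i hi) (hCAi i (by omega)) (hCAi (i+1) (by omega)) hbd
    _ = n * (4 * CA * ε) + δ₂ * ((fm (u n) - fm (u 0)) + (f (u n) - f (u 0))) := by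
        rw [Finset.sum_add_distrib, Finset.sum_const, Finset.card_range, ← Finset.mul_sum,
          Finset.sum_add_distrib, s1, s2, nsmul_eq_mul, mul_add]
    _ ≤ 4 * n * CA * ε + 2 * δ₂ := by
        have h1 : δ₂ * ((fm (u n) - fm (u 0)) + (f (u n) - f (u 0))) ≤ δ₂ * 2 := by
          apply mul_le_mul_of_nonneg_left (by linarith) hδ₂
        nlinarith [h1]

set_option maxHeartbeats 1000000 in
/-- **Weighted Helly–Bray lemma.**
Let `λ > λ' ≥ 0` and `φ_μ(x) = (1+|x|)^μ`. Let `ψ` be a càdlàg function with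
`sup_x |ψ(x)| (1+|x|)^{-λ'} < ∞`. Let `f, f₁, f₂, …` be nondecreasing càdlàg
functions (Stieltjes functions) with total variation bounded by `1`, such that
`sup_x |(fₙ - f)(x)| (1+|x|)^λ → 0`, and such that `∫ (1+|x|)^{λ'} df < ∞` and
`∫ (1+|x|)^{λ'} dfₙ < ∞` for all `n`. Then `∫ ψ df` and `∫ ψ dfₙ` exist and
`∫ ψ dfₙ → ∫ ψ df`. -/
theorem weighted_helly_bray
    (lam lam' : ℝ) (hlam : lam' < lam) (hlam' : 0 ≤ lam')
    (ψ : ℝ → ℝ)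
    (hψ_rc : ∀ x : ℝ, ContinuousWithinAt ψ (Set.Ici x) x)
    (hψ_ll : ∀ x : ℝ, ∃ l : ℝ, Tendsto ψ (nhdsWithin x (Set.Iio x)) (nhds l))
    (C : ℝ) (hψC : ∀ x : ℝ, |ψ x| * (1 + |x|) ^ (-lam') ≤ C)
    (f : StieltjesFunction ℝ) (fs : ℕ → StieltjesFunction ℝ)
    (hf1 : f.measure Set.univ ≤ 1) (hfs1 : ∀ n, (fs n).measure Set.univ ≤ 1)
    (hconv : ∀ ε > (0 : ℝ), ∃ N : ℕ, ∀ n ≥ N, ∀ x : ℝ,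
      |fs n x - f x| * (1 + |x|) ^ lam ≤ ε)
    (hfint : Integrable (fun x => (1 + |x|) ^ lam') f.measure)
    (hfsint : ∀ n, Integrable (fun x => (1 + |x|) ^ lam') (fs n).measure) :
    Integrable ψ f.measure ∧ (∀ n, Integrable ψ (fs n).measure) ∧
      Tendsto (fun n => ∫ x, ψ x ∂(fs n).measure) atTop (nhds (∫ x, ψ x ∂f.measure)) := by
  have hψm : Measurable ψ := whb_measurable ψ hψ_rc
  set g : ℝ → ℝ := fun x => (1 + |x|) ^ lam' with hgdef
  have hgpos : ∀ x, 0 < g x := fun x => Real.rpow_pos_of_pos (by positivity) _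
  have hC0 : 0 ≤ C := le_trans (by positivity) (hψC 0)
  have hgC : ∀ x, |ψ x| ≤ C * g x := by
    intro x
    have h := hψC x
    rw [Real.rpow_neg (by positivity)] at h
    rw [← div_le_iff₀ (hgpos x)]
    rwa [div_eq_mul_inv]
  have hintegrable : ∀ μ : Measure ℝ, Integrable g μ → Integrable ψ μ := by
    intro μ hgint
    apply (hgint.const_mul C).mono' hψm.aestronglyMeasurable
    exact ae_of_all _ fun x => by rw [Real.norm_eq_abs]; exact hgC x
  refine ⟨hintegrable _ hfint, fun n => hintegrable _ (hfsint n), ?_⟩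
  have hint : Integrable ψ f.measure := hintegrable _ hfint
  have hintm : ∀ n, Integrable ψ (fs n).measure := fun n => hintegrable _ (hfsint n)
  -- weight ≥ 1 for lam
  have hl0 : 0 ≤ lam := hlam'.trans hlam.le
  have hw1 : ∀ x : ℝ, 1 ≤ (1 + |x|) ^ lam := fun x =>
    Real.one_le_rpow (by linarith [abs_nonneg x]) hl0
  rw [Metric.tendsto_atTop]
  intro δ hδ
  -- constants
  set c2 : ℝ := 2 ^ (lam' - lam) with hc2
  have hc2nn : 0 ≤ c2 := Real.rpow_nonneg (by norm_num) _
  have hc2lt : c2 < 1 := Real.rpow_lt_one_of_one_lt_of_neg one_lt_two (by linarith)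
  set Econst : ℝ := 4 * 2 ^ lam' * (1 - c2)⁻¹ with hEconst
  have hEpos : 0 < Econst := by
    apply mul_pos (by positivity)
    exact inv_pos.mpr (by linarith)
  set η : ℝ := δ / (16 * (C + 1) * (2 ^ lam' + 1)) with hη
  have h2lnn : (0:ℝ) ≤ 2 ^ lam' := Real.rpow_nonneg (by norm_num) _
  have hηpos : 0 < η := by
    apply div_pos hδ
    positivity
  -- measurability of the ENNReal weight
  have hgm : Measurable fun x : ℝ => ENNReal.ofReal (g x) := by
    apply ENNReal.measurable_ofReal.comp
    exact ((continuous_const.add continuous_abs).rpow_const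
      (fun x => Or.inl (by positivity : (1:ℝ) + |x| ≠ 0))).measurable
  -- choose A
  obtain ⟨A, hA, htailν⟩ : ∃ A : ℝ, 1 ≤ A ∧
      ∫⁻ x in (Set.Ioc (-A) A)ᶜ, ENNReal.ofReal (g x) ∂f.measure ≤ ENNReal.ofReal η := by
    set μ' : Measure ℝ := f.measure.withDensity fun x => ENNReal.ofReal (g x) with hμ'
    have hμ's : ∀ s : Set ℝ, MeasurableSet s →
        μ' s = ∫⁻ x in s, ENNReal.ofReal (g x) ∂f.measure := fun s hs =>
      withDensity_apply _ hs
    have hfin : μ' Set.univ ≠ ⊤ := by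
      rw [hμ's _ MeasurableSet.univ, Measure.restrict_univ]
      exact hfint.lintegral_lt_top.ne
    set s : ℕ → Set ℝ := fun i => (Set.Ioc (-(i+1:ℝ)) (i+1))ᶜ with hs
    have hsm : ∀ i, NullMeasurableSet (s i) μ' := fun i =>
      (measurableSet_Ioc.compl).nullMeasurableSet
    have hanti : Antitone s := by
      intro i j hij
      have hij' : (i:ℝ) ≤ j := Nat.cast_le.mpr hij
      apply Set.compl_subset_compl.mpr
      exact Set.Ioc_subset_Ioc (by linarith) (by linarith)
    have hiInter : ⋂ i, s i = ∅ := by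
      ext x
      simp only [hs, Set.mem_iInter, Set.mem_empty_iff_false, iff_false, Set.mem_compl_iff,
        not_forall, not_not]
      obtain ⟨i, hi⟩ := exists_nat_ge |x|
      refine ⟨i, Set.mem_Ioc.mpr ⟨?_, ?_⟩⟩
      · linarith [neg_abs_le x]
      · linarith [le_abs_self x]
    have htend : Tendsto (μ' ∘ s) atTop (nhds 0) := by
      have := tendsto_measure_iInter_atTop hsm hanti ⟨0, ne_top_of_le_ne_top hfin (measure_mono (Set.subset_univ _))⟩
      rwa [hiInter, measure_empty] at this
    have := (htend.eventually_lt_const (by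
      exact ENNReal.ofReal_pos.mpr hηpos)).exists
    obtain ⟨i, hi⟩ := this
    refine ⟨(i:ℝ)+1, by linarith [Nat.cast_nonneg (α := ℝ) i], ?_⟩
    rw [← hμ's _ (measurableSet_Ioc.compl)]
    exact le_of_lt hi
  -- partition
  set δ₂ : ℝ := δ / 16 with hδ₂def
  have hδ₂pos : 0 < δ₂ := by positivity
  obtain ⟨n, u, hu, hu0, hun, hosc⟩ :=
    whb_partition ψ hψ_rc hψ_ll (-A) A δ₂ (by linarith) hδ₂pos
  have hunA : u n = A := hun n le_rfl
  set CA : ℝ := C * (1 + A) ^ lam' with hCAdef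
  have hCAnn : 0 ≤ CA := mul_nonneg hC0 (Real.rpow_nonneg (by linarith) _)
  have hCAi : ∀ i, i ≤ n → |ψ (u i)| ≤ CA := by
    intro i hi
    have h1 : -A ≤ u i := hu0 ▸ hu (Nat.zero_le i)
    have h2 : u i ≤ A := hunA ▸ hu hi
    calc |ψ (u i)| ≤ C * g (u i) := hgC _
      _ ≤ CA := by
        apply mul_le_mul_of_nonneg_left ?_ hC0
        apply Real.rpow_le_rpow (by positivity) ?_ hlam'
        have : |u i| ≤ A := abs_le.mpr ⟨h1, h2⟩
        linarith
  -- choose ε and N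
  set ε : ℝ := min (δ / (16 * (C + 1) * (Econst + 1))) (δ / (16 * (4 * n * CA + 1)))
    with hεdef
  have hεpos : 0 < ε := by
    apply lt_min
    · apply div_pos hδ (by positivity)
    · apply div_pos hδ (by positivity)
  obtain ⟨N, hN⟩ := hconv ε hεpos
  refine ⟨N, fun m hm => ?_⟩
  have hbdw := hN m hm
  have hbd1 : ∀ x, |fs m x - f x| ≤ ε := by
    intro x
    calc |fs m x - f x| ≤ |fs m x - f x| * (1 + |x|) ^ lam :=
          le_mul_of_one_le_right (abs_nonneg _) (hw1 x)
      _ ≤ ε := hbdw x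
  have hbdcl : ∀ x, |fs m x - f x| ≤ ε * (1 + |x|) ^ (-lam) := by
    intro x
    have hp : (0:ℝ) < (1 + |x|) ^ lam := Real.rpow_pos_of_pos (by positivity) _
    rw [Real.rpow_neg (by positivity), ← div_eq_mul_inv, le_div_iff₀ hp]
    exact hbdw x
  -- masses
  have hmassf : f (u n) - f (u 0) ≤ 1 := by
    have h1 : f.measure (Set.Ioc (u 0) (u n)) ≤ 1 :=
      le_trans (measure_mono (Set.subset_univ _)) hf1
    rw [StieltjesFunction.measure_Ioc] at h1
    exact ENNReal.ofReal_le_one.mp h1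
  have hmassm : fs m (u n) - fs m (u 0) ≤ 1 := by
    have h1 : (fs m).measure (Set.Ioc (u 0) (u n)) ≤ 1 :=
      le_trans (measure_mono (Set.subset_univ _)) (hfs1 m)
    rw [StieltjesFunction.measure_Ioc] at h1
    exact ENNReal.ofReal_le_one.mp h1
  -- middle estimate
  have hmid := whb_mid ψ f (fs m) hint (hintm m) ε δ₂ CA hεpos.le hδ₂pos.le hCAnn n u hu
    hosc hCAi hbd1 hmassf hmassm
  rw [hu0, hunA] at hmid
  -- tail estimates
  have htailm := whb_tail f (fs m) lam lam' ε A hA hεpos.le hlam hlam' hbdcl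
  have hgc : Continuous g := (continuous_const.add continuous_abs).rpow_const
    (fun x => Or.inl (by positivity : (1:ℝ) + |x| ≠ 0))
  have htr : ∀ h : StieltjesFunction ℝ, Integrable g h.measure → Integrable ψ h.measure →
      |∫ x in (Set.Ioc (-A) A)ᶜ, ψ x ∂h.measure|
        ≤ C * (∫⁻ x in (Set.Ioc (-A) A)ᶜ, ENNReal.ofReal (g x) ∂h.measure).toReal := by
    intro h hgi hψi
    have e1 : |∫ x in (Set.Ioc (-A) A)ᶜ, ψ x ∂h.measure|
        ≤ ∫ x in (Set.Ioc (-A) A)ᶜ, |ψ x| ∂h.measure := by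
      rw [← Real.norm_eq_abs]
      exact (norm_integral_le_integral_norm _).trans (le_of_eq (by simp [Real.norm_eq_abs]))
    have e2 : (∫ x in (Set.Ioc (-A) A)ᶜ, |ψ x| ∂h.measure)
        ≤ ∫ x in (Set.Ioc (-A) A)ᶜ, C * g x ∂h.measure :=
      integral_mono hψi.abs.restrict ((hgi.const_mul C).restrict) (fun x => hgC x)
    have e3 : (∫ x in (Set.Ioc (-A) A)ᶜ, C * g x ∂h.measure)
        = C * ∫ x in (Set.Ioc (-A) A)ᶜ, g x ∂h.measure := integral_const_mul C g
    have e4 : (∫ x in (Set.Ioc (-A) A)ᶜ, g x ∂h.measure)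
        = (∫⁻ x in (Set.Ioc (-A) A)ᶜ, ENNReal.ofReal (g x) ∂h.measure).toReal :=
      integral_eq_lintegral_of_nonneg_ae (ae_of_all _ fun x => (hgpos x).le)
        hgc.aestronglyMeasurable.restrict
    rw [e3, e4] at e2
    exact e1.trans e2
  have htν : |∫ x in (Set.Ioc (-A) A)ᶜ, ψ x ∂f.measure| ≤ C * η := by
    refine (htr f hfint hint).trans ?_
    apply mul_le_mul_of_nonneg_left ?_ hC0
    have := ENNReal.toReal_mono ENNReal.ofReal_ne_top htailν
    rwa [ENNReal.toReal_ofReal hηpos.le] at this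
  have htνm : |∫ x in (Set.Ioc (-A) A)ᶜ, ψ x ∂(fs m).measure|
      ≤ C * (2 ^ lam' * η + ε * Econst) := by
    refine (htr (fs m) (hfsint m) (hintm m)).trans ?_
    apply mul_le_mul_of_nonneg_left ?_ hC0
    have hb : ∫⁻ x in (Set.Ioc (-A) A)ᶜ, ENNReal.ofReal (g x) ∂(fs m).measure
        ≤ ENNReal.ofReal (2 ^ lam' * η + ε * Econst) := by
      calc ∫⁻ x in (Set.Ioc (-A) A)ᶜ, ENNReal.ofReal (g x) ∂(fs m).measure
          ≤ ENNReal.ofReal (2 ^ lam')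
              * ∫⁻ x in (Set.Ioc (-A) A)ᶜ, ENNReal.ofReal (g x) ∂f.measure
            + ENNReal.ofReal (ε * Econst) := htailm
        _ ≤ ENNReal.ofReal (2 ^ lam') * ENNReal.ofReal η + ENNReal.ofReal (ε * Econst) := by
            gcongr
        _ = ENNReal.ofReal (2 ^ lam' * η + ε * Econst) := by
            rw [← ENNReal.ofReal_mul h2lnn, ← ENNReal.ofReal_add (by positivity)
              (mul_nonneg hεpos.le hEpos.le)]
    have := ENNReal.toReal_mono ENNReal.ofReal_ne_top hb
    rwa [ENNReal.toReal_ofReal (by positivity)] at this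
  -- assemble
  rw [Real.dist_eq]
  have hdecm := integral_add_compl (measurableSet_Ioc : MeasurableSet (Set.Ioc (-A) A))
    (hintm m)
  have hdec := integral_add_compl (measurableSet_Ioc : MeasurableSet (Set.Ioc (-A) A)) hint
  have key : (∫ x, ψ x ∂(fs m).measure) - ∫ x, ψ x ∂f.measure
      = ((∫ x in Set.Ioc (-A) A, ψ x ∂(fs m).measure)
          - ∫ x in Set.Ioc (-A) A, ψ x ∂f.measure)
        + ((∫ x in (Set.Ioc (-A) A)ᶜ, ψ x ∂(fs m).measure)
          - ∫ x in (Set.Ioc (-A) A)ᶜ, ψ x ∂f.measure) := by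
    rw [← hdecm, ← hdec]; ring
  -- numeric bounds
  have hb1 : 4 * n * CA * ε ≤ δ / 16 := by
    have hε2 : ε ≤ δ / (16 * (4 * n * CA + 1)) := min_le_right _ _
    have hpos : (0:ℝ) < 16 * (4 * n * CA + 1) := by positivity
    rw [le_div_iff₀ hpos] at hε2
    nlinarith [mul_nonneg (mul_nonneg (by positivity : (0:ℝ) ≤ 4 * (n:ℝ)) hCAnn) hεpos.le]
  have hb2 : C * ε * Econst ≤ δ / 16 := by
    have hε2 : ε ≤ δ / (16 * (C + 1) * (Econst + 1)) := min_le_left _ _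
    have hpos : (0:ℝ) < 16 * (C + 1) * (Econst + 1) := by positivity
    rw [le_div_iff₀ hpos] at hε2
    nlinarith [mul_nonneg (mul_nonneg hC0 hεpos.le) hEpos.le, mul_nonneg hC0 hεpos.le,
      mul_nonneg hεpos.le hEpos.le]
  have hb3 : C * (2 ^ lam' * η) ≤ δ / 16 := by
    have heq : (C + 1) * (2 ^ lam' + 1) * η = δ / 16 := by
      rw [hη]; field_simp
    nlinarith [hηpos.le, mul_nonneg hC0 hηpos.le, mul_nonneg h2lnn hηpos.le]
  have hb4 : C * η ≤ δ / 16 := by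
    have heq : (C + 1) * (2 ^ lam' + 1) * η = δ / 16 := by
      rw [hη]; field_simp
    nlinarith [hηpos.le, mul_nonneg hC0 hηpos.le, mul_nonneg h2lnn hηpos.le,
      mul_nonneg (mul_nonneg hC0 h2lnn) hηpos.le]
  calc |(∫ x, ψ x ∂(fs m).measure) - ∫ x, ψ x ∂f.measure|
      ≤ |(∫ x in Set.Ioc (-A) A, ψ x ∂(fs m).measure)
          - ∫ x in Set.Ioc (-A) A, ψ x ∂f.measure|
        + |(∫ x in (Set.Ioc (-A) A)ᶜ, ψ x ∂(fs m).measure)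
          - ∫ x in (Set.Ioc (-A) A)ᶜ, ψ x ∂f.measure| := by
        rw [key]; exact abs_add_le _ _
    _ ≤ (4 * n * CA * ε + 2 * δ₂)
        + (|∫ x in (Set.Ioc (-A) A)ᶜ, ψ x ∂(fs m).measure|
          + |∫ x in (Set.Ioc (-A) A)ᶜ, ψ x ∂f.measure|) := by
        apply add_le_add hmid (abs_sub _ _)
    _ ≤ (δ / 16 + 2 * (δ / 16)) + ((C * (2 ^ lam' * η) + C * ε * Econst) + C * η) := by
        apply add_le_add (add_le_add hb1 le_rfl)
        apply add_le_add ?_ htν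
        refine htνm.trans (le_of_eq ?_)
        ring
    _ < δ := by linarith
end

section
/- Let λ > λ' ≥ 0 and φ_μ(x) := (1+|x|)^μ. Suppose f, f₁, f₂, … are nondecreasing càdlàg functions with variation bounded by 1, sup_x |(f_n − f)(x)| φ_λ(x) → 0, ∫ φ_{λ'} df < ∞, and ∫ φ_{λ'} df_n < ∞ for all n. Then sup_{n∈ℕ} ∫ φ_{λ'}(x) df_n(x) < ∞. -/
open MeasureTheory Filter Set

private lemma stieltjes_measure_Ioi' (g : StieltjesFunction ℝ) {L : ℝ}
    (hg : Tendsto g atTop (nhds L)) (x : ℝ) :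
    g.measure (Ioi x) = ENNReal.ofReal (L - g x) := by
  have hmono : Monotone fun b => Ioc x b := fun a b hab => Ioc_subset_Ioc le_rfl hab
  have h : Tendsto (fun b => g.measure (Ioc x b)) atTop (nhds (g.measure (Ioi x))) := by
    have := tendsto_measure_iUnion_atTop (μ := g.measure) hmono
    rwa [iUnion_Ioc_right] at this
  refine tendsto_nhds_unique h ?_
  simp_rw [g.measure_Ioc]
  exact ENNReal.tendsto_ofReal (hg.sub_const _)

/-- **Uniform boundedness of weighted moments** (from the proof of the weighted
Helly–Bray lemma). Let `λ > λ' ≥ 0` and `φ_μ(x) = (1+|x|)^μ`. If `f, f₁, f₂, …` are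
nondecreasing càdlàg functions (Stieltjes functions) with variation bounded by `1`,
`sup_x |(fₙ - f)(x)| (1+|x|)^λ → 0`, `∫ (1+|x|)^{λ'} df < ∞` and
`∫ (1+|x|)^{λ'} dfₙ < ∞` for all `n`, then `sup_n ∫ (1+|x|)^{λ'} dfₙ < ∞`. -/
theorem uniform_bound_weighted_moments
    (lam lam' : ℝ) (hlam : lam' < lam) (hlam' : 0 ≤ lam')
    (f : StieltjesFunction ℝ) (fs : ℕ → StieltjesFunction ℝ)
    (hf1 : f.measure Set.univ ≤ 1) (hfs1 : ∀ n, (fs n).measure Set.univ ≤ 1)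
    (hconv : ∀ ε > (0 : ℝ), ∃ N : ℕ, ∀ n ≥ N, ∀ x : ℝ,
      |fs n x - f x| * (1 + |x|) ^ lam ≤ ε)
    (hfint : Integrable (fun x => (1 + |x|) ^ lam') f.measure)
    (hfsint : ∀ n, Integrable (fun x => (1 + |x|) ^ lam') (fs n).measure) :
    ∃ M : ℝ, ∀ n : ℕ, (∫ x, (1 + |x|) ^ lam' ∂(fs n).measure) ≤ M := by
  rcases hlam'.eq_or_lt with h0 | hlam'pos
  · -- trivial case `lam' = 0`
    refine ⟨1, fun n => ?_⟩
    simp_rw [← h0, Real.rpow_zero]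
    rw [integral_const, smul_eq_mul, mul_one]
    exact ENNReal.toReal_le_of_le_ofReal zero_le_one
      (by rw [ENNReal.ofReal_one]; exact hfs1 n)
  have hlam0 : 0 < lam := hlam'pos.trans hlam
  set φ : ℝ → ℝ := fun x => (1 + |x|) ^ lam' with hφ
  have φ_nn : ∀ x : ℝ, 0 ≤ φ x := fun x => Real.rpow_nonneg (by positivity) _
  have φ_cont : Continuous φ :=
    (continuous_const.add continuous_abs).rpow_const (fun x => Or.inr hlam')
  -- the exponent for the tail bound
  set e : ℝ := lam'⁻¹ * -lam with he_def
  have he : e < -1 := by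
    have h := (one_lt_div hlam'pos).mpr hlam
    rw [div_eq_inv_mul] at h
    have : e = -(lam'⁻¹ * lam) := by ring
    linarith
  -- boundedness of f
  have hbd : ∀ a b : ℝ, f b - f a ≤ 1 := by
    intro a b
    rcases le_total b a with h | h
    · have := f.mono h; linarith
    · have h1 : f.measure (Ioc a b) ≤ 1 := le_trans (measure_mono (subset_univ _)) hf1
      rw [f.measure_Ioc, ← ENNReal.ofReal_one] at h1
      exact (ENNReal.ofReal_le_ofReal_iff zero_le_one).mp h1
  obtain ⟨N, hN⟩ := hconv 1 one_pos
  -- limits of f at ±∞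
  have hbddA : BddAbove (range f) := by
    refine ⟨f 0 + 1, ?_⟩; rintro y ⟨x, rfl⟩; linarith [hbd 0 x]
  have hbddB : BddBelow (range f) := by
    refine ⟨f 0 - 1, ?_⟩; rintro y ⟨x, rfl⟩; linarith [hbd x 0]
  set L : ℝ := ⨆ x, f x with hL_def
  set l : ℝ := ⨅ x, f x with hl_def
  have hL : Tendsto f atTop (nhds L) := tendsto_atTop_ciSup f.mono hbddA
  have hl : Tendsto f atBot (nhds l) := tendsto_atBot_ciInf f.mono hbddB
  -- the bound function tends to 0 at ±∞
  have hb_top : Tendsto (fun x : ℝ => (1 + |x|) ^ (-lam)) atTop (nhds 0) :=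
    (tendsto_rpow_neg_atTop hlam0).comp
      (tendsto_atTop_add_const_left _ 1 tendsto_abs_atTop_atTop)
  have hb_bot : Tendsto (fun x : ℝ => (1 + |x|) ^ (-lam)) atBot (nhds 0) :=
    (tendsto_rpow_neg_atTop hlam0).comp
      (tendsto_atTop_add_const_left _ 1 tendsto_abs_atBot_atTop)
  -- constants
  have hC_int : IntegrableOn (fun t : ℝ => t ^ e) (Ioi 1) := integrableOn_Ioi_rpow_of_lt he one_pos
  set C : ℝ := ∫ t in Ioi (1:ℝ), t ^ e with hC_def
  have hC_nn : 0 ≤ C :=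
    setIntegral_nonneg measurableSet_Ioi fun t ht => Real.rpow_nonneg (le_of_lt (lt_trans one_pos ht)) _
  have hC_lint : ∫⁻ t in Ioi (1:ℝ), ENNReal.ofReal (t ^ e) = ENNReal.ofReal C := by
    rw [← ofReal_integral_eq_lintegral_ofReal hC_int]
    filter_upwards [self_mem_ae_restrict measurableSet_Ioi] with t ht
    exact Real.rpow_nonneg (le_of_lt (lt_trans one_pos ht)) _
  set B : ℝ := 1 + (∫ x, φ x ∂f.measure) + 2 * C with hB_def
  have hint_nn : 0 ≤ ∫ x, φ x ∂f.measure := integral_nonneg φ_nn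
  have hB_nn : 0 ≤ B := by positivity
  -- tail function of f
  set F : ℝ → ENNReal := fun t => f.measure {x | t ≤ φ x} with hF_def
  have F_anti : Antitone F := fun t1 t2 h => measure_mono fun x hx => le_trans h hx
  have F_meas : Measurable F := F_anti.measurable
  have hF_int : ∫⁻ t in Ioi (0:ℝ), F t = ∫⁻ x, ENNReal.ofReal (φ x) ∂f.measure :=
    (lintegral_eq_lintegral_meas_le f.measure (ae_of_all _ φ_nn)
      φ_cont.measurable.aemeasurable).symm
  -- main bound for n ≥ N
  have key : ∀ n, N ≤ n → (∫ x, φ x ∂(fs n).measure) ≤ B := by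
    intro n hn
    have hd : ∀ x : ℝ, |fs n x - f x| ≤ (1 + |x|) ^ (-lam) := by
      intro x
      have h2 : (0:ℝ) < (1 + |x|) ^ lam := Real.rpow_pos_of_pos (by positivity) _
      rw [Real.rpow_neg (by positivity), ← one_div]
      exact (le_div_iff₀ h2).mpr (hN n hn x)
    have hdiff : Tendsto (fun x => fs n x - f x) atTop (nhds 0) :=
      squeeze_zero_norm (fun x => by rw [Real.norm_eq_abs]; exact hd x) hb_top
    have hdiff' : Tendsto (fun x => fs n x - f x) atBot (nhds 0) :=
      squeeze_zero_norm (fun x => by rw [Real.norm_eq_abs]; exact hd x) hb_bot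
    have hLn : Tendsto (fs n) atTop (nhds L) := by
      have h3 := hL.add hdiff
      simpa using h3
    have hln : Tendsto (fs n) atBot (nhds l) := by
      have h3 := hl.add hdiff'
      simpa using h3
    -- the tail estimate
    have tail : ∀ t : ℝ, 1 < t →
        (fs n).measure {x | t < φ x} ≤ F t + 2 * ENNReal.ofReal (t ^ e) := by
      intro t ht
      have ht0 : (0:ℝ) < t := lt_trans one_pos ht
      set r : ℝ := t ^ lam'⁻¹ - 1 with hr_def
      have h1r : 1 + r = t ^ lam'⁻¹ := by rw [hr_def]; ring
      have hrpos : 0 < r := by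
        have h1 : 1 < t ^ lam'⁻¹ :=
          (Real.one_lt_rpow_iff_of_pos ht0).mpr (Or.inl ⟨ht, inv_pos.mpr hlam'pos⟩)
        rw [hr_def]; linarith
      have hA : {x : ℝ | t < φ x} ⊆ Iic (-r) ∪ Ioi r := by
        intro x hx
        have h1 : t ^ lam'⁻¹ < 1 + |x| :=
          (Real.rpow_inv_lt_iff_of_pos ht0.le (by positivity) hlam'pos).mpr hx
        have hrx : r < |x| := by rw [hr_def]; linarith
        rcases lt_abs.mp hrx with h | h
        · exact Or.inr h
        · exact Or.inl (by simpa [mem_Iic] using by linarith : x ≤ -r)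
      have hB' : Iic (-r) ∪ Ioi r ⊆ {x : ℝ | t ≤ φ x} := by
        intro x hx
        have hxr : r ≤ |x| := by
          rcases hx with h | h
          · have hx' : x ≤ -r := h
            calc r ≤ -x := by linarith
              _ ≤ |x| := neg_le_abs x
          · exact le_trans (le_of_lt h) (le_abs_self x)
        have h2 : t ^ lam'⁻¹ ≤ 1 + |x| := by rw [← h1r]; linarith
        show t ≤ (1 + |x|) ^ lam'
        calc t = (t ^ lam'⁻¹) ^ lam' := by
              rw [← Real.rpow_mul ht0.le, inv_mul_cancel₀ hlam'pos.ne', Real.rpow_one]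
          _ ≤ (1 + |x|) ^ lam' :=
              Real.rpow_le_rpow (Real.rpow_nonneg ht0.le _) h2 hlam'
      have habs : |(-r)| = r := by rw [abs_neg, abs_of_pos hrpos]
      have hbnd : (1 + r) ^ (-lam) = t ^ e := by
        rw [h1r, he_def, Real.rpow_mul ht0.le]
      have hub : fs n (-r) ≤ f (-r) + t ^ e := by
        have := hd (-r)
        rw [habs, hbnd] at this
        have := abs_le.mp this
        linarith [this.2]
      have hlb : f r - t ^ e ≤ fs n r := by
        have := hd r
        rw [abs_of_pos hrpos, hbnd] at this
        have := abs_le.mp this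
        linarith [this.1]
      have h1 : (fs n).measure (Iic (-r)) ≤ f.measure (Iic (-r)) + ENNReal.ofReal (t ^ e) := by
        rw [StieltjesFunction.measure_Iic _ hln, StieltjesFunction.measure_Iic _ hl]
        calc ENNReal.ofReal (fs n (-r) - l)
            ≤ ENNReal.ofReal ((f (-r) - l) + t ^ e) := ENNReal.ofReal_le_ofReal (by linarith)
          _ ≤ ENNReal.ofReal (f (-r) - l) + ENNReal.ofReal (t ^ e) := ENNReal.ofReal_add_le
      have h2 : (fs n).measure (Ioi r) ≤ f.measure (Ioi r) + ENNReal.ofReal (t ^ e) := by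
        rw [stieltjes_measure_Ioi' _ hLn, stieltjes_measure_Ioi' _ hL]
        calc ENNReal.ofReal (L - fs n r)
            ≤ ENNReal.ofReal ((L - f r) + t ^ e) := ENNReal.ofReal_le_ofReal (by linarith)
          _ ≤ ENNReal.ofReal (L - f r) + ENNReal.ofReal (t ^ e) := ENNReal.ofReal_add_le
      calc (fs n).measure {x | t < φ x}
          ≤ (fs n).measure (Iic (-r) ∪ Ioi r) := measure_mono hA
        _ ≤ (fs n).measure (Iic (-r)) + (fs n).measure (Ioi r) := measure_union_le _ _
        _ ≤ (f.measure (Iic (-r)) + ENNReal.ofReal (t ^ e)) +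
              (f.measure (Ioi r) + ENNReal.ofReal (t ^ e)) := add_le_add h1 h2
        _ = (f.measure (Iic (-r)) + f.measure (Ioi r)) + 2 * ENNReal.ofReal (t ^ e) := by ring
        _ = f.measure (Iic (-r) ∪ Ioi r) + 2 * ENNReal.ofReal (t ^ e) := by
            rw [measure_union (Iic_disjoint_Ioi (by linarith)) measurableSet_Ioi]
        _ ≤ F t + 2 * ENNReal.ofReal (t ^ e) :=
            add_le_add_left (measure_mono hB') _
    -- layer cake
    have hlayer : ∫⁻ x, ENNReal.ofReal (φ x) ∂(fs n).measure
        = ∫⁻ t in Ioi (0:ℝ), (fs n).measure {x | t < φ x} :=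
      lintegral_eq_lintegral_meas_lt _ (ae_of_all _ φ_nn) φ_cont.measurable.aemeasurable
    have hsplit : ∫⁻ t in Ioi (0:ℝ), (fs n).measure {x | t < φ x}
        = (∫⁻ t in Ioc (0:ℝ) 1, (fs n).measure {x | t < φ x})
          + ∫⁻ t in Ioi (1:ℝ), (fs n).measure {x | t < φ x} := by
      rw [← Ioc_union_Ioi_eq_Ioi zero_le_one,
        lintegral_union measurableSet_Ioi Ioc_disjoint_Ioi_same]
    have hterm1 : (∫⁻ t in Ioc (0:ℝ) 1, (fs n).measure {x | t < φ x}) ≤ 1 := by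
      calc (∫⁻ t in Ioc (0:ℝ) 1, (fs n).measure {x | t < φ x})
          ≤ ∫⁻ _ in Ioc (0:ℝ) 1, 1 :=
            lintegral_mono fun t => (measure_mono (subset_univ _)).trans (hfs1 n)
        _ = 1 := by simp [Real.volume_Ioc]
    have hterm2 : (∫⁻ t in Ioi (1:ℝ), (fs n).measure {x | t < φ x})
        ≤ (∫⁻ x, ENNReal.ofReal (φ x) ∂f.measure) + 2 * ENNReal.ofReal C := by
      calc (∫⁻ t in Ioi (1:ℝ), (fs n).measure {x | t < φ x})
          ≤ ∫⁻ t in Ioi (1:ℝ), (F t + 2 * ENNReal.ofReal (t ^ e)) := by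
            refine lintegral_mono_ae ?_
            filter_upwards [self_mem_ae_restrict measurableSet_Ioi] with t ht
            exact tail t ht
        _ = (∫⁻ t in Ioi (1:ℝ), F t) + ∫⁻ t in Ioi (1:ℝ), 2 * ENNReal.ofReal (t ^ e) :=
            lintegral_add_left F_meas _
        _ ≤ (∫⁻ t in Ioi (0:ℝ), F t) + 2 * ∫⁻ t in Ioi (1:ℝ), ENNReal.ofReal (t ^ e) := by
            refine add_le_add (lintegral_mono_set (Ioi_subset_Ioi zero_le_one)) ?_
            rw [lintegral_const_mul' 2 _ ENNReal.ofNat_ne_top]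
        _ = (∫⁻ x, ENNReal.ofReal (φ x) ∂f.measure) + 2 * ENNReal.ofReal C := by
            rw [hF_int, hC_lint]
    have hle : ∫⁻ x, ENNReal.ofReal (φ x) ∂(fs n).measure ≤ ENNReal.ofReal B := by
      have hBof : ENNReal.ofReal B
          = 1 + ((∫⁻ x, ENNReal.ofReal (φ x) ∂f.measure) + 2 * ENNReal.ofReal C) := by
        rw [hB_def, ENNReal.ofReal_add (by positivity) (by positivity),
          ENNReal.ofReal_add zero_le_one hint_nn, ENNReal.ofReal_one,
          ofReal_integral_eq_lintegral_ofReal hfint (ae_of_all _ φ_nn),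
          ENNReal.ofReal_mul zero_le_two, ENNReal.ofReal_ofNat, add_assoc]
      rw [hBof, hlayer, hsplit]
      exact add_le_add hterm1 hterm2
    have heq : (∫ x, φ x ∂(fs n).measure)
        = (∫⁻ x, ENNReal.ofReal (φ x) ∂(fs n).measure).toReal :=
      integral_eq_lintegral_of_nonneg_ae (ae_of_all _ φ_nn) φ_cont.aestronglyMeasurable
    rw [heq]
    calc (∫⁻ x, ENNReal.ofReal (φ x) ∂(fs n).measure).toReal
        ≤ (ENNReal.ofReal B).toReal := ENNReal.toReal_mono ENNReal.ofReal_ne_top hle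
      _ = B := ENNReal.toReal_ofReal hB_nn
  -- combine with the finitely many indices below N
  refine ⟨B + ∑ k ∈ Finset.range N, |∫ x, φ x ∂(fs k).measure|, fun n => ?_⟩
  have hsum_nn : 0 ≤ ∑ k ∈ Finset.range N, |∫ x, φ x ∂(fs k).measure| :=
    Finset.sum_nonneg fun i _ => abs_nonneg _
  rcases le_or_gt N n with hn | hn
  · exact le_trans (key n hn) (by linarith)
  · have h1 : (∫ x, φ x ∂(fs n).measure) ≤ |∫ x, φ x ∂(fs n).measure| := le_abs_self _
    have h2 : |∫ x, φ x ∂(fs n).measure|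
        ≤ ∑ k ∈ Finset.range N, |∫ x, φ x ∂(fs k).measure| :=
      Finset.single_le_sum (f := fun k => |∫ x, φ x ∂(fs k).measure|) (fun i _ => abs_nonneg _) (Finset.mem_range.mpr hn)
    linarith
end

section
/- Let λ ≥ 0, let D_λ be the space of càdlàg functions ψ on ℝ with sup_x |ψ(x)|(1+|x|)^λ < ∞, equipped with the σ-algebra D_λ generated by the coordinate projections π_x(ψ) = ψ(x). Let g : ℝ² → ℝ be measurable, F a distribution function, and W a measurable map from a measurable space (Ω̃, F̃) to (D_λ, D_λ) such that for every ω̃ the function W(ω̃) + F is a nonnegative nondecreasing càdlàg function for which the double integral U(W(ω̃)+F) := ∫∫ g(x₁,x₂) d(W(ω̃)+F)(x₁) d(W(ω̃)+F)(x₂) exists. Then the map ω̃ ↦ U(W(ω̃)+F) is measurable from (Ω̃, F̃) to (ℝ, B(ℝ)). -/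
open MeasureTheory Set

/-- Build a Stieltjes function from a monotone right-continuous function. -/
noncomputable def stieltjesOf (f : ℝ → ℝ) (hf : Monotone f)
    (hc : ∀ x, ContinuousWithinAt f (Set.Ici x) x) : StieltjesFunction ℝ :=
  ⟨f, hf, hc⟩

lemma aux_Ioc_cover : (⋃ n : ℕ, Ioc (-(n:ℝ)) (n:ℝ)) = univ := by
  ext x
  simp only [mem_iUnion, mem_Ioc, mem_univ, iff_true]
  obtain ⟨n, hn⟩ := exists_nat_gt |x|
  exact ⟨n, (abs_lt.mp hn).1, ((abs_lt.mp hn).2).le⟩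

lemma aux_meas_coe {Ω : Type*} [MeasurableSpace Ω] (μ : Ω → Measure ℝ)
    (hIoc : ∀ a b : ℝ, Measurable fun ω => μ ω (Ioc a b))
    (hfin : ∀ (ω) (a b : ℝ), μ ω (Ioc a b) ≠ ⊤) :
    ∀ t : Set ℝ, MeasurableSet t → Measurable fun ω => μ ω t := by
  have key : ∀ n : ℕ, ∀ t : Set ℝ, MeasurableSet t →
      Measurable fun ω => μ ω (t ∩ Ioc (-(n:ℝ)) n) := by
    intro n
    refine MeasurableSpace.induction_on_inter (borel_eq_generateFrom_Ioc ℝ)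
      (isPiSystem_Ioc (id : ℝ → ℝ) id) ?_ ?_ ?_ ?_
    · simpa using measurable_const
    · rintro t ⟨l, u, hlu, rfl⟩
      rw [Ioc_inter_Ioc]
      exact hIoc _ _
    · intro t ht hC
      have h1 : ∀ ω, μ ω (tᶜ ∩ Ioc (-(n:ℝ)) n)
          = μ ω (Ioc (-(n:ℝ)) n) - μ ω (t ∩ Ioc (-(n:ℝ)) n) := by
        intro ω
        rw [← measure_diff inter_subset_right
          ((ht.inter measurableSet_Ioc).nullMeasurableSet)
          ((measure_mono inter_subset_right).trans_lt (hfin ω _ _).lt_top).ne]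
        congr 1
        ext x
        simp only [mem_diff, mem_inter_iff, mem_compl_iff]
        tauto
      simp only [h1]
      exact (hIoc _ _).sub hC
    · intro f hd hfm hC
      have h1 : ∀ ω, μ ω ((⋃ i, f i) ∩ Ioc (-(n:ℝ)) n)
          = ∑' i, μ ω (f i ∩ Ioc (-(n:ℝ)) n) := by
        intro ω
        rw [iUnion_inter, measure_iUnion
          (hd.mono fun i j h => h.mono inter_subset_left inter_subset_left)
          (fun i => (hfm i).inter measurableSet_Ioc)]
      simp only [h1]
      exact Measurable.ennreal_tsum hC
  intro t ht
  have h1 : ∀ ω, μ ω t = ⨆ n : ℕ, μ ω (t ∩ Ioc (-(n:ℝ)) n) := by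
    intro ω
    rw [← Directed.measure_iUnion, ← inter_iUnion, aux_Ioc_cover, inter_univ]
    exact (Monotone.directed_le fun i j hij =>
      inter_subset_inter_right _ (Ioc_subset_Ioc (neg_le_neg (Nat.cast_le.mpr hij)) (Nat.cast_le.mpr hij)))
  simp only [h1]
  exact Measurable.iSup fun n => key n t ht

lemma aux_prod_cover : (⋃ n : ℕ, (Ioc (-(n:ℝ)) (n:ℝ)) ×ˢ (Ioc (-(n:ℝ)) (n:ℝ))) = univ := by
  ext ⟨x, y⟩
  simp only [mem_iUnion, mem_prod, mem_Ioc, mem_univ, iff_true]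
  obtain ⟨n, hn⟩ := exists_nat_gt (max |x| |y|)
  have hx := (abs_lt.mp ((le_max_left |x| |y|).trans_lt hn))
  have hy := (abs_lt.mp ((le_max_right |x| |y|).trans_lt hn))
  exact ⟨n, ⟨⟨by linarith [hx.1], by linarith [hx.2]⟩, ⟨by linarith [hy.1], by linarith [hy.2]⟩⟩⟩

lemma aux_meas_coe_prod {Ω : Type*} [MeasurableSpace Ω] (μ : Ω → Measure ℝ)
    (hsf : ∀ ω, SigmaFinite (μ ω))
    (hmeas : ∀ t : Set ℝ, MeasurableSet t → Measurable fun ω => μ ω t)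
    (hfin : ∀ (ω) (a b : ℝ), μ ω (Ioc a b) ≠ ⊤) :
    ∀ t : Set (ℝ × ℝ), MeasurableSet t → Measurable fun ω => (μ ω).prod (μ ω) t := by
  have hRfin : ∀ (ω) (n : ℕ),
      (μ ω).prod (μ ω) ((Ioc (-(n:ℝ)) n) ×ˢ (Ioc (-(n:ℝ)) n)) ≠ ⊤ := by
    intro ω n
    haveI := hsf ω
    rw [Measure.prod_prod]
    exact ENNReal.mul_ne_top (hfin ω _ _) (hfin ω _ _)
  have key : ∀ n : ℕ, ∀ t : Set (ℝ × ℝ), MeasurableSet t →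
      Measurable fun ω => (μ ω).prod (μ ω) (t ∩ (Ioc (-(n:ℝ)) n) ×ˢ (Ioc (-(n:ℝ)) n)) := by
    intro n
    refine MeasurableSpace.induction_on_inter generateFrom_prod.symm
      isPiSystem_prod ?_ ?_ ?_ ?_
    · simpa using measurable_const
    · rintro t ⟨A, hA, B, hB, rfl⟩
      have hA' : MeasurableSet A := hA
      have hB' : MeasurableSet B := hB
      have h1 : ∀ ω, (μ ω).prod (μ ω) ((A ×ˢ B) ∩ (Ioc (-(n:ℝ)) n) ×ˢ (Ioc (-(n:ℝ)) n))
          = μ ω (A ∩ Ioc (-(n:ℝ)) n) * μ ω (B ∩ Ioc (-(n:ℝ)) n) := by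
        intro ω
        haveI := hsf ω
        rw [prod_inter_prod, Measure.prod_prod]
      simp only [h1]
      exact (hmeas _ (hA'.inter measurableSet_Ioc)).mul (hmeas _ (hB'.inter measurableSet_Ioc))
    · intro t ht hC
      have h1 : ∀ ω, (μ ω).prod (μ ω) (tᶜ ∩ (Ioc (-(n:ℝ)) n) ×ˢ (Ioc (-(n:ℝ)) n))
          = (μ ω).prod (μ ω) ((Ioc (-(n:ℝ)) n) ×ˢ (Ioc (-(n:ℝ)) n))
            - (μ ω).prod (μ ω) (t ∩ (Ioc (-(n:ℝ)) n) ×ˢ (Ioc (-(n:ℝ)) n)) := by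
        intro ω
        rw [← measure_diff inter_subset_right
          ((ht.inter (measurableSet_Ioc.prod measurableSet_Ioc)).nullMeasurableSet)
          ((measure_mono inter_subset_right).trans_lt (hRfin ω n).lt_top).ne]
        congr 1
        ext x
        simp only [mem_diff, mem_inter_iff, mem_compl_iff]
        tauto
      simp only [h1]
      have hRmeas : Measurable fun ω =>
          (μ ω).prod (μ ω) ((Ioc (-(n:ℝ)) n) ×ˢ (Ioc (-(n:ℝ)) n)) := by
        have h2 : ∀ ω, (μ ω).prod (μ ω) ((Ioc (-(n:ℝ)) n) ×ˢ (Ioc (-(n:ℝ)) n))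
            = μ ω (Ioc (-(n:ℝ)) n) * μ ω (Ioc (-(n:ℝ)) n) := by
          intro ω; haveI := hsf ω; rw [Measure.prod_prod]
        simp only [h2]
        exact (hmeas _ measurableSet_Ioc).mul (hmeas _ measurableSet_Ioc)
      exact hRmeas.sub hC
    · intro f hd hfm hC
      have h1 : ∀ ω, (μ ω).prod (μ ω) ((⋃ i, f i) ∩ (Ioc (-(n:ℝ)) n) ×ˢ (Ioc (-(n:ℝ)) n))
          = ∑' i, (μ ω).prod (μ ω) (f i ∩ (Ioc (-(n:ℝ)) n) ×ˢ (Ioc (-(n:ℝ)) n)) := by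
        intro ω
        rw [iUnion_inter, measure_iUnion
          (hd.mono fun i j h => h.mono inter_subset_left inter_subset_left)
          (fun i => (hfm i).inter (measurableSet_Ioc.prod measurableSet_Ioc))]
      simp only [h1]
      exact Measurable.ennreal_tsum hC
  intro t ht
  have h1 : ∀ ω, (μ ω).prod (μ ω) t
      = ⨆ n : ℕ, (μ ω).prod (μ ω) (t ∩ (Ioc (-(n:ℝ)) n) ×ˢ (Ioc (-(n:ℝ)) n)) := by
    intro ω
    rw [← Directed.measure_iUnion, ← inter_iUnion, aux_prod_cover, inter_univ]
    refine Monotone.directed_le fun i j hij => inter_subset_inter_right _ ?_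
    have h : Ioc (-(i:ℝ)) i ⊆ Ioc (-(j:ℝ)) j :=
      Ioc_subset_Ioc (neg_le_neg (by exact_mod_cast hij)) (by exact_mod_cast hij)
    exact prod_mono h h
  simp only [h1]
  exact Measurable.iSup fun n => key n t ht

/-- **Measurability of the V-functional** (final step in the proof of the main
theorem). Let `λ ≥ 0` and let `W` be a map from a measurable space `Ω̃` into the space
`D_λ` of càdlàg functions `ψ` with `sup_x |ψ(x)|(1+|x|)^λ < ∞`, measurable with
respect to the σ-algebra generated by the coordinate projections, i.e. `ω ↦ W(ω)(x)`
is measurable for each `x`. Suppose that for each `ω` the function `W(ω) + F` is a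
nonnegative nondecreasing càdlàg function for which the double integral
`U(W(ω)+F) = ∫∫ g(x₁,x₂) d(W(ω)+F)(x₁) d(W(ω)+F)(x₂)` exists. Then
`ω ↦ U(W(ω)+F)` is measurable. -/
theorem V_functional_measurable
    {Ω : Type*} [MeasurableSpace Ω]
    (lam : ℝ) (hlam : 0 ≤ lam)
    (g : ℝ → ℝ → ℝ) (hg : Measurable (Function.uncurry g))
    (F : ℝ → ℝ) (W : Ω → ℝ → ℝ)
    (hWD : ∀ ω, ∃ C : ℝ, ∀ x : ℝ, |W ω x| * (1 + |x|) ^ lam ≤ C)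
    (hWmeas : ∀ x : ℝ, Measurable fun ω => W ω x)
    (hmono : ∀ ω, Monotone fun x => W ω x + F x)
    (hrc : ∀ ω x, ContinuousWithinAt (fun x => W ω x + F x) (Set.Ici x) x)
    (hnonneg : ∀ ω x, 0 ≤ W ω x + F x)
    (hint : ∀ ω, Integrable (Function.uncurry g)
      (((stieltjesOf _ (hmono ω) (hrc ω)).measure).prod
        ((stieltjesOf _ (hmono ω) (hrc ω)).measure))) :
    Measurable fun ω => ∫ p : ℝ × ℝ, Function.uncurry g p
      ∂(((stieltjesOf _ (hmono ω) (hrc ω)).measure).prod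
        ((stieltjesOf _ (hmono ω) (hrc ω)).measure)) := by
  set μ : Ω → Measure ℝ := fun ω => (stieltjesOf _ (hmono ω) (hrc ω)).measure with hμ
  have hIoc : ∀ a b : ℝ, Measurable fun ω => μ ω (Ioc a b) := by
    intro a b
    have h1 : ∀ ω, μ ω (Ioc a b) = ENNReal.ofReal ((W ω b + F b) - (W ω a + F a)) :=
      fun ω => StieltjesFunction.measure_Ioc _ a b
    simp only [h1]
    exact (((hWmeas b).add_const (F b)).sub ((hWmeas a).add_const (F a))).ennreal_ofReal
  have hfin : ∀ (ω) (a b : ℝ), μ ω (Ioc a b) ≠ ⊤ := fun ω a b => by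
    rw [hμ, StieltjesFunction.measure_Ioc]; exact ENNReal.ofReal_ne_top
  have hcoe := aux_meas_coe μ hIoc hfin
  have hsf : ∀ ω, SigmaFinite (μ ω) := fun ω => by rw [hμ]; infer_instance
  have hν : Measurable fun ω => (μ ω).prod (μ ω) :=
    Measure.measurable_of_measurable_coe _ fun s hs => aux_meas_coe_prod μ hsf hcoe hfin s hs
  have heq : ∀ ω, (∫ p : ℝ × ℝ, Function.uncurry g p ∂((μ ω).prod (μ ω)))
      = (∫⁻ p, ENNReal.ofReal (Function.uncurry g p) ∂((μ ω).prod (μ ω))).toReal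
        - (∫⁻ p, ENNReal.ofReal (-(Function.uncurry g p)) ∂((μ ω).prod (μ ω))).toReal :=
    fun ω => integral_eq_lintegral_pos_part_sub_lintegral_neg_part (hint ω)
  show Measurable fun ω => ∫ p : ℝ × ℝ, Function.uncurry g p ∂((μ ω).prod (μ ω))
  simp only [heq]
  exact ((Measure.measurable_lintegral hg.ennreal_ofReal).comp hν).ennreal_toReal.sub
    ((Measure.measurable_lintegral hg.neg.ennreal_ofReal).comp hν).ennreal_toReal
end
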